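/- arXiv:2309.02413 — 10 statements merged into one kernel-verified Lean document; each statement's English description precedes it below -/
import Mathlib

section
/- With β as above, β(x,y)·β(y,x) = 1 if and only if y = c·x for some c > 0 (x and y are collinear). -/
open scoped ENNReal

/-- The Birkhoff coefficient `β(x,y) = inf {r > 0 : r • x - y ∈ C}`, valued in `ℝ≥0∞`. -/
noncomputable def hilbertBeta {X : Type*} [AddCommGroup X] [Module ℝ X]
    (C : Set X) (x y : X) : ℝ≥0∞ :=
  sInf {e : ℝ≥0∞ | ∃ r : ℝ, 0 < r ∧ e = ENNReal.ofReal r ∧ r • x - y ∈ C}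

lemma hilbertBeta_le {X : Type*} [AddCommGroup X] [Module ℝ X]
    (C : Set X) {x y : X} {r : ℝ} (hr : 0 < r) (h : r • x - y ∈ C) :
    hilbertBeta C x y ≤ ENNReal.ofReal r :=
  sInf_le ⟨r, hr, rfl, h⟩

lemma hilbertBeta_smul {X : Type*} [AddCommGroup X] [Module ℝ X]
    (C : Set X)
    (hsmul : ∀ r : ℝ, 0 ≤ r → ∀ x ∈ C, r • x ∈ C)
    (hproper : C ∩ (-C) = {0})
    {x : X} (hx : x ∈ C) (hx0 : x ≠ 0) {c : ℝ} (hc : 0 < c) :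
    hilbertBeta C x (c • x) = ENNReal.ofReal c := by
  apply le_antisymm
  · have h0 : (0:X) ∈ C := by simpa using hsmul 0 le_rfl x hx
    exact hilbertBeta_le C hc (by simpa using h0)
  · apply le_sInf
    rintro e ⟨r, hr, rfl, hmem⟩
    apply ENNReal.ofReal_le_ofReal
    by_contra hlt
    push_neg at hlt
    have h1 : r • x - c • x ∈ C := hmem
    have h2 : r • x - c • x ∈ -C := by
      have : (c - r) • x ∈ C := hsmul _ (by linarith) x hx
      simpa [sub_smul, neg_sub] using this
    have hz : r • x - c • x = 0 := by
      have := hproper ▸ Set.mem_inter h1 h2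
      simpa using this
    rw [← sub_smul] at hz
    rcases smul_eq_zero.1 hz with h | h
    · have : r = c := by linarith [sub_eq_zero.1 (by linarith [h] : r - c = (0:ℝ))]
      linarith
    · exact hx0 h

lemma hilbertBeta_mem {X : Type*} [AddCommGroup X] [Module ℝ X] [TopologicalSpace X]
    [IsTopologicalAddGroup X] [ContinuousSMul ℝ X]
    (C : Set X) (hCclosed : IsClosed C)
    {x y : X} (h0 : hilbertBeta C x y ≠ 0) (htop : hilbertBeta C x y ≠ ⊤) :
    (hilbertBeta C x y).toReal • x - y ∈ C := by
  set A := (hilbertBeta C x y).toReal with hA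
  have hApos : 0 < A := ENNReal.toReal_pos h0 htop
  set S : Set ℝ := {r | 0 < r ∧ r • x - y ∈ C} with hS
  have hlb : ∀ r ∈ S, A ≤ r := by
    intro r hr
    have h1 : hilbertBeta C x y ≤ ENNReal.ofReal r := sInf_le ⟨r, hr.1, rfl, hr.2⟩
    have h2 := (ENNReal.toReal_le_toReal htop ENNReal.ofReal_ne_top).2 h1
    rwa [ENNReal.toReal_ofReal hr.1.le] at h2
  have hcl : A ∈ closure S := by
    rw [Metric.mem_closure_iff]
    intro ε hε
    have hlt : hilbertBeta C x y < ENNReal.ofReal (A + ε) := by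
      conv_lhs => rw [← ENNReal.ofReal_toReal htop]
      exact (ENNReal.ofReal_lt_ofReal_iff (by linarith)).2 (by linarith)
    rw [hilbertBeta, sInf_lt_iff] at hlt
    obtain ⟨e, ⟨r, hrpos, rfl, hrmem⟩, helt⟩ := hlt
    have hrlt : r < A + ε := by
      have := (ENNReal.ofReal_lt_ofReal_iff (by linarith)).1 helt
      exact this
    refine ⟨r, ⟨hrpos, hrmem⟩, ?_⟩
    have hAr : A ≤ r := hlb r ⟨hrpos, hrmem⟩
    rw [Real.dist_eq, abs_sub_comm, abs_of_nonneg (by linarith)]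
    linarith
  have hTclosed : IsClosed {r : ℝ | r • x - y ∈ C} :=
    hCclosed.preimage ((continuous_id.smul continuous_const).sub continuous_const)
  have hsub : closure S ⊆ {r : ℝ | r • x - y ∈ C} := by
    refine closure_minimal ?_ hTclosed
    intro r hr; exact hr.2
  exact hsub hcl

/-- `β(x,y) · β(y,x) = 1` if and only if `y = c • x` for some `c > 0`
(i.e. `x` and `y` are collinear). -/
theorem stmt1 {X : Type*} [AddCommGroup X] [Module ℝ X] [TopologicalSpace X]
    [IsTopologicalAddGroup X] [ContinuousSMul ℝ X] [LocallyConvexSpace ℝ X]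
    (C : Set X) (hCclosed : IsClosed C)
    (hadd : ∀ x ∈ C, ∀ y ∈ C, x + y ∈ C)
    (hsmul : ∀ r : ℝ, 0 ≤ r → ∀ x ∈ C, r • x ∈ C)
    (hproper : C ∩ (-C) = {0})
    (x y : X) (hx : x ∈ C \ {0}) (hy : y ∈ C \ {0}) :
    hilbertBeta C x y * hilbertBeta C y x = 1 ↔ ∃ c : ℝ, 0 < c ∧ y = c • x := by
  constructor
  · intro h
    have h1 : hilbertBeta C x y ≠ 0 := by
      intro h0; rw [h0, zero_mul] at h; exact zero_ne_one h
    have h3 : hilbertBeta C y x ≠ 0 := by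
      intro h0; rw [h0, mul_zero] at h; exact zero_ne_one h
    have h2 : hilbertBeta C x y ≠ ⊤ := by
      intro h0; rw [h0, ENNReal.top_mul h3] at h; exact ENNReal.top_ne_one h
    have h4 : hilbertBeta C y x ≠ ⊤ := by
      intro h0; rw [h0, ENNReal.mul_top h1] at h; exact ENNReal.top_ne_one h
    set A := (hilbertBeta C x y).toReal with hA
    set B := (hilbertBeta C y x).toReal with hB
    have hAB : A * B = 1 := by
      rw [hA, hB, ← ENNReal.toReal_mul, h, ENNReal.toReal_one]
    have hApos : 0 < A := ENNReal.toReal_pos h1 h2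
    have m1 : A • x - y ∈ C := hilbertBeta_mem C hCclosed h1 h2
    have m2 : B • y - x ∈ C := hilbertBeta_mem C hCclosed h3 h4
    have m3 : y - A • x ∈ C := by
      have hmem := hsmul A hApos.le _ m2
      have heq : A • (B • y - x) = y - A • x := by
        rw [smul_sub, smul_smul, hAB, one_smul]
      rwa [heq] at hmem
    have hz : A • x - y = 0 := by
      have hmem : A • x - y ∈ C ∩ (-C) := ⟨m1, by simpa [neg_sub] using m3⟩
      rw [hproper] at hmem
      simpa using hmem
    exact ⟨A, hApos, (sub_eq_zero.1 hz).symm⟩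
  · rintro ⟨c, hc, rfl⟩
    have hx0 : x ≠ 0 := by simpa using hx.2
    have hcx : c • x ∈ C := hsmul c hc.le x hx.1
    have hcx0 : c • x ≠ 0 := smul_ne_zero hc.ne' hx0
    have hxeq : x = c⁻¹ • (c • x) := by
      rw [smul_smul, inv_mul_cancel₀ hc.ne', one_smul]
    have hb2 : hilbertBeta C (c • x) x = ENNReal.ofReal c⁻¹ := by
      have h2 := hilbertBeta_smul C hsmul hproper hcx hcx0 (inv_pos.2 hc)
      rwa [← hxeq] at h2
    rw [hilbertBeta_smul C hsmul hproper hx.1 hx0 hc, hb2,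
      ← ENNReal.ofReal_mul hc.le, mul_inv_cancel₀ hc.ne', ENNReal.ofReal_one]
end

section
/- For x, y ∈ C \ {0}, β(x,y) = sup{⟨f, y⟩/⟨f, x⟩ : f ∈ C*, ⟨f, x⟩ ≠ 0}, where C* is the dual cone. -/
open scoped ENNReal

/-- The Birkhoff coefficient in its `sup` form:
`β(x,y) = sup {r > 0 : r • x - y ∉ C}`, valued in `ℝ≥0∞`. -/
noncomputable def hilbertBetaSup {X : Type*} [AddCommGroup X] [Module ℝ X]
    (C : Set X) (x y : X) : ℝ≥0∞ :=
  sSup {e : ℝ≥0∞ | ∃ r : ℝ, 0 < r ∧ e = ENNReal.ofReal r ∧ r • x - y ∉ C}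

/-- Separation lemma: a point outside a closed convex cone is separated by a
nonnegative functional. -/
lemma sep_lemma {X : Type*} [AddCommGroup X] [Module ℝ X] [TopologicalSpace X]
    [IsTopologicalAddGroup X] [ContinuousSMul ℝ X] [LocallyConvexSpace ℝ X]
    (C : Set X) (hCclosed : IsClosed C)
    (hadd : ∀ x ∈ C, ∀ y ∈ C, x + y ∈ C)
    (hsmul : ∀ r : ℝ, 0 ≤ r → ∀ x ∈ C, r • x ∈ C)
    (h0 : (0 : X) ∈ C)
    {p : X} (hp : p ∉ C) :
    ∃ f : X →L[ℝ] ℝ, (∀ z ∈ C, 0 ≤ f z) ∧ f p < 0 := by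
  have hconv : Convex ℝ C := by
    intro a ha b hb s t hs ht hst
    exact hadd _ (hsmul s hs a ha) _ (hsmul t ht b hb)
  obtain ⟨f, u, hfp, hfC⟩ := geometric_hahn_banach_point_closed hconv hCclosed hp
  have hu0 : u < 0 := by have := hfC 0 h0; simpa using this
  refine ⟨f, ?_, hfp.trans hu0⟩
  intro z hz
  by_contra hneg
  push_neg at hneg
  have hzne : f z ≠ 0 := ne_of_lt hneg
  have ht : (0:ℝ) < (u - 1) / f z := div_pos_of_neg_of_neg (by linarith) hneg
  have hmem := hsmul _ ht.le z hz
  have := hfC _ hmem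
  rw [map_smul] at this
  simp only [smul_eq_mul] at this
  rw [div_mul_cancel₀ _ hzne] at this
  linarith

/-- Dual characterization: for `x, y ∈ C \ {0}`,
`β(x,y) = sup {⟨f,y⟩/⟨f,x⟩ : f ∈ C*, ⟨f,x⟩ ≠ 0}`. -/
theorem stmt4 {X : Type*} [AddCommGroup X] [Module ℝ X] [TopologicalSpace X]
    [IsTopologicalAddGroup X] [ContinuousSMul ℝ X] [LocallyConvexSpace ℝ X]
    (C : Set X) (hCclosed : IsClosed C)
    (hadd : ∀ x ∈ C, ∀ y ∈ C, x + y ∈ C)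
    (hsmul : ∀ r : ℝ, 0 ≤ r → ∀ x ∈ C, r • x ∈ C)
    (hproper : C ∩ (-C) = {0})
    (x y : X) (hx : x ∈ C \ {0}) (hy : y ∈ C \ {0}) :
    hilbertBetaSup C x y =
      sSup {e : ℝ≥0∞ | ∃ f : X →L[ℝ] ℝ, (∀ z ∈ C, 0 ≤ f z) ∧ f x ≠ 0 ∧
        e = ENNReal.ofReal (f y / f x)} := by
  have h0 : (0 : X) ∈ C := by
    have := hsmul 0 le_rfl x hx.1; simpa using this
  unfold hilbertBetaSup
  -- existence of g ∈ C* with g x > 0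
  have hnx : -x ∉ C := by
    intro h
    have : x ∈ C ∩ (-C) := ⟨hx.1, by simpa using h⟩
    rw [hproper] at this
    exact hx.2 this
  obtain ⟨g, hgC, hgx⟩ := sep_lemma C hCclosed hadd hsmul h0 hnx
  have hgx' : 0 < g x := by simpa using neg_pos.mpr hgx |>.trans_eq (by simp)
  apply le_antisymm
  · -- primal ≤ dual
    apply sSup_le
    rintro e ⟨r, hr, rfl, hrC⟩
    obtain ⟨f, hfC, hfneg⟩ := sep_lemma C hCclosed hadd hsmul h0 hrC
    have hkey : r * f x < f y := by
      have : f (r • x - y) = r * f x - f y := by simp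
      linarith [this ▸ hfneg]
    rcases eq_or_ne (f x) 0 with hfx | hfx
    · -- f x = 0, so f y > 0; dual sup is ⊤
      have hfy : 0 < f y := by rw [hfx] at hkey; linarith
      have htop : sSup {e : ℝ≥0∞ | ∃ f : X →L[ℝ] ℝ, (∀ z ∈ C, 0 ≤ f z) ∧ f x ≠ 0 ∧
          e = ENNReal.ofReal (f y / f x)} = ⊤ := by
        rw [sSup_eq_top]
        intro b hb
        set M : ℝ := b.toReal + 1 with hM
        have hM1 : 0 < M := by positivity
        set t : ℝ := f y / (M * g x) with htdef
        have htpos : 0 < t := div_pos hfy (by positivity)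
        refine ⟨ENNReal.ofReal (((f + t • g) y) / ((f + t • g) x)), ⟨f + t • g, ?_, ?_, rfl⟩, ?_⟩
        · intro z hz
          have := hfC z hz
          have := hgC z hz
          simp only [ContinuousLinearMap.add_apply, ContinuousLinearMap.smul_apply,
            smul_eq_mul]
          nlinarith
        · simp only [ContinuousLinearMap.add_apply, ContinuousLinearMap.smul_apply,
            smul_eq_mul, hfx]
          positivity
        · have hval : M ≤ ((f + t • g) y) / ((f + t • g) x) := by
            have hden : t * g x = f y / M := by
              rw [htdef]; field_simp
            have hgy : 0 ≤ g y := hgC y hy.1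
            simp only [ContinuousLinearMap.add_apply, ContinuousLinearMap.smul_apply,
              smul_eq_mul, hfx, zero_add, hden]
            rw [le_div_iff₀ (by positivity)]
            have h1 : M * (f y / M) = f y := by field_simp
            nlinarith [mul_nonneg htpos.le hgy]
          calc b < ENNReal.ofReal M := by
                  rw [ENNReal.lt_ofReal_iff_toReal_lt hb.ne]; simp [hM]
            _ ≤ _ := ENNReal.ofReal_le_ofReal hval
      rw [htop]; exact le_top
    · -- f x ≠ 0
      have hfx' : 0 < f x := lt_of_le_of_ne (hfC x hx.1) (Ne.symm hfx)
      calc ENNReal.ofReal r ≤ ENNReal.ofReal (f y / f x) :=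
            ENNReal.ofReal_le_ofReal (by rw [le_div_iff₀ hfx']; linarith)
        _ ≤ _ := le_sSup (by exact ⟨f, hfC, hfx, rfl⟩)
  · -- dual ≤ primal
    apply sSup_le
    rintro e ⟨f, hfC, hfx, rfl⟩
    have hfx' : 0 < f x := lt_of_le_of_ne (hfC x hx.1) (Ne.symm hfx)
    rcases le_or_gt (f y) 0 with hfy | hfy
    · have : f y / f x ≤ 0 := div_nonpos_of_nonpos_of_nonneg hfy hfx'.le
      simp [ENNReal.ofReal_eq_zero.mpr this]
    · set R : ℝ := f y / f x with hR
      have hRpos : 0 < R := div_pos hfy hfx'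
      apply le_of_forall_lt
      intro c hc
      have hcne : c ≠ ⊤ := hc.ne_top
      have hct : c.toReal < R := by
        rwa [ENNReal.lt_ofReal_iff_toReal_lt hcne] at hc
      set r : ℝ := (c.toReal + R) / 2 with hrdef
      have hc0 : 0 ≤ c.toReal := ENNReal.toReal_nonneg
      have hr0 : 0 < r := by rw [hrdef]; linarith
      have hrR : r < R := by rw [hrdef]; linarith
      have hnotC : r • x - y ∉ C := by
        intro hmem
        have := hfC _ hmem
        simp only [map_sub, map_smul, smul_eq_mul] at this
        have : r * f x < f y := by
          rw [hR, lt_div_iff₀ hfx'] at hrR; linarith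
        linarith [hfC _ hmem, (by simp : f (r • x - y) = r * f x - f y)]
      calc c < ENNReal.ofReal r := by
            rw [ENNReal.lt_ofReal_iff_toReal_lt hcne]; rw [hrdef]; linarith
        _ ≤ _ := le_sSup (by exact ⟨r, hr0, rfl, hnotC⟩)
end

section
/- If L : X → X is linear and maps C \ {0} into C \ {0}, where C is a proper closed convex cone, then T(Lx, Ly) ≤ τ(L) · T(x,y) for all x, y ∈ C \ {0}, where T(x,y) = tanh(H(x,y)/4) (with tanh(∞):=1) and τ(L) = sup over x,y ∈ C\{0} of T(Lx, Ly). -/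
open scoped ENNReal

/-- The Hilbert projective distance `H(x,y) = log (β(x,y) β(y,x)) ∈ [0,∞]`. -/
noncomputable def hilbertDist {X : Type*} [AddCommGroup X] [Module ℝ X]
    (C : Set X) (x y : X) : EReal :=
  ENNReal.log (hilbertBeta C x y * hilbertBeta C y x)

open scoped Classical in
/-- The `𝒯`-distance `𝒯(x,y) = tanh (H(x,y)/4)`, with the convention `tanh ∞ := 1`. -/
noncomputable def tanhDist {X : Type*} [AddCommGroup X] [Module ℝ X]
    (C : Set X) (x y : X) : ℝ :=
  if hilbertDist C x y = ⊤ then 1 else Real.tanh ((hilbertDist C x y).toReal / 4)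

private lemma tanh_eq' (x : ℝ) :
    Real.tanh x = (Real.exp (2*x) - 1) / (Real.exp (2*x) + 1) := by
  have e2 : Real.exp (2*x) = Real.exp x * Real.exp x := by
    rw [← Real.exp_add]; ring_nf
  have hx := Real.exp_pos x
  rw [Real.tanh_eq_sinh_div_cosh, Real.sinh_eq, Real.cosh_eq, Real.exp_neg, e2]
  rw [div_eq_div_iff (by positivity) (by positivity)]
  field_simp

private lemma tanh_mono {a b : ℝ} (h : a ≤ b) : Real.tanh a ≤ Real.tanh b := by
  rw [tanh_eq', tanh_eq']
  have ha := Real.exp_pos (2*a); have hb := Real.exp_pos (2*b)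
  have hle : Real.exp (2*a) ≤ Real.exp (2*b) := Real.exp_le_exp.2 (by linarith)
  rw [div_le_div_iff₀ (by positivity) (by positivity)]
  nlinarith

private lemma tanh_nonneg {a : ℝ} (h : 0 ≤ a) : 0 ≤ Real.tanh a := by
  simpa [Real.tanh_zero] using tanh_mono h

private lemma tanh_le_one (a : ℝ) : Real.tanh a ≤ 1 := by
  rw [tanh_eq']
  have ha := Real.exp_pos (2*a)
  rw [div_le_one (by positivity)]; linarith

private lemma tanh_quarter {A : ℝ} (hA : 0 < A) :
    Real.tanh (Real.log A / 4) = (Real.sqrt A - 1) / (Real.sqrt A + 1) := by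
  have h : Real.sqrt A = Real.exp (2 * (Real.log A / 4)) := by
    rw [Real.sqrt_eq_rpow, Real.rpow_def_of_pos hA]
    ring_nf
  rw [tanh_eq', ← h]

private lemma mono_frac {a b : ℝ} (ha : 0 ≤ a) (h : a ≤ b) :
    (a - 1) / (a + 1) ≤ (b - 1) / (b + 1) := by
  rw [div_le_div_iff₀ (by linarith) (by linarith)]
  nlinarith

private lemma frac_prod {a b : ℝ} (ha : 1 ≤ a) (hb : 1 ≤ b) :
    ((a*b + 1)/(a + b) - 1)/((a*b + 1)/(a + b) + 1) = (b - 1)/(b + 1) * ((a - 1)/(a + 1)) := by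
  have h1 : (0:ℝ) < a + b := by linarith
  have h5 : (a*b + 1)/(a + b) + 1 ≠ 0 := by positivity
  field_simp
  ring

private lemma analytic_core {a1 a2 b1 b2 : ℝ} (ha1 : 0 < a1) (ha2 : 0 < a2)
    (hb1 : 0 < b1) (hb2 : 0 < b2) (hA : 1 ≤ a1 * a2) (hB : 1 ≤ b1 * b2) :
    Real.tanh (Real.log ((1 + a1*b1)/(a2 + b1) * ((1 + a2*b2)/(a1 + b2))) / 4)
      ≤ Real.tanh (Real.log (b1*b2) / 4) * Real.tanh (Real.log (a1*a2) / 4) := by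
  set t := Real.sqrt (a1*a2*(b1*b2)) with ht_def
  have htnn : 0 ≤ t := Real.sqrt_nonneg _
  have ht2 : t^2 = a1*a2*(b1*b2) := Real.sq_sqrt (by positivity)
  have hα : Real.sqrt (a1*a2) * Real.sqrt (b1*b2) = t := (Real.sqrt_mul (by positivity) _).symm
  have hα1 : 1 ≤ Real.sqrt (a1*a2) := by
    rw [show (1:ℝ) = Real.sqrt 1 by simp]; exact Real.sqrt_le_sqrt hA
  have hβ1 : 1 ≤ Real.sqrt (b1*b2) := by
    rw [show (1:ℝ) = Real.sqrt 1 by simp]; exact Real.sqrt_le_sqrt hB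
  have hα2 : Real.sqrt (a1*a2) ^ 2 = a1*a2 := Real.sq_sqrt (by positivity)
  have hβ2 : Real.sqrt (b1*b2) ^ 2 = b1*b2 := Real.sq_sqrt (by positivity)
  set w := Real.sqrt (a1*a2) + Real.sqrt (b1*b2) with hw_def
  have hwpos : 0 < w := by positivity
  have hw2 : w^2 = a1*a2 + b1*b2 + 2*t := by
    rw [hw_def]; ring_nf; nlinarith [hα, hα2, hβ2]
  -- AM-GM : a1*b1 + a2*b2 ≥ 2*t
  have hamgm : 2*t ≤ a1*b1 + a2*b2 := by
    have h1 : t = Real.sqrt (a1*b1*(a2*b2)) := by rw [ht_def]; ring_nf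
    have h2 : a1*b1*(a2*b2) ≤ ((a1*b1 + a2*b2)/2)^2 := by nlinarith [sq_nonneg (a1*b1 - a2*b2)]
    have h3 : t ≤ (a1*b1 + a2*b2)/2 := by
      rw [h1]
      calc Real.sqrt (a1*b1*(a2*b2)) ≤ Real.sqrt (((a1*b1 + a2*b2)/2)^2) := Real.sqrt_le_sqrt h2
        _ = (a1*b1 + a2*b2)/2 := Real.sqrt_sq (by positivity)
    linarith
  -- the polynomial inequality
  have poly : (1 + a1*b1)*(1 + a2*b2)*(a1*a2 + b1*b2 + 2*t)
      ≤ (a2 + b1)*(a1 + b2)*(t^2 + 1 + 2*t) := by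
    nlinarith [mul_nonneg (mul_nonneg (sub_nonneg.2 hA) (sub_nonneg.2 hB))
      (by linarith : (0:ℝ) ≤ a1*b1 + a2*b2 - 2*t), ht2,
      mul_pos (by positivity : (0:ℝ) < a2 + b1) (by positivity : (0:ℝ) < a1 + b2)]
  set P := (1 + a1*b1)/(a2 + b1) * ((1 + a2*b2)/(a1 + b2)) with hP_def
  have hPpos : 0 < P := by positivity
  have hPQ : P ≤ ((t+1)/w)^2 := by
    rw [hP_def, div_mul_div_comm, div_pow, div_le_div_iff₀ (by positivity) (by positivity)]
    calc (1 + a1*b1)*(1 + a2*b2) * w^2 = (1 + a1*b1)*(1 + a2*b2)*(a1*a2 + b1*b2 + 2*t) := by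
          rw [hw2]
      _ ≤ (a2 + b1)*(a1 + b2)*(t^2 + 1 + 2*t) := poly
      _ = (t+1)^2 * ((a2 + b1)*(a1 + b2)) := by ring
  have hsqrtP : Real.sqrt P ≤ (t+1)/w := by
    calc Real.sqrt P ≤ Real.sqrt (((t+1)/w)^2) := Real.sqrt_le_sqrt hPQ
      _ = (t+1)/w := Real.sqrt_sq (by positivity)
  rw [tanh_quarter hPpos, tanh_quarter (by positivity : (0:ℝ) < b1*b2),
    tanh_quarter (by positivity : (0:ℝ) < a1*a2)]
  calc (Real.sqrt P - 1)/(Real.sqrt P + 1) ≤ ((t+1)/w - 1)/((t+1)/w + 1) :=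
        mono_frac (Real.sqrt_nonneg _) hsqrtP
    _ = (Real.sqrt (b1*b2) - 1)/(Real.sqrt (b1*b2) + 1) *
        ((Real.sqrt (a1*a2) - 1)/(Real.sqrt (a1*a2) + 1)) := by
        rw [← hα, hw_def]
        exact frac_prod hα1 hβ1



section Aux

variable {X : Type*} [AddCommGroup X] [Module ℝ X] [TopologicalSpace X]
  [IsTopologicalAddGroup X] [ContinuousSMul ℝ X] (C : Set X)

private lemma beta_le {x y : X} {r : ℝ} (hr : 0 < r) (h : r • x - y ∈ C) :
    hilbertBeta C x y ≤ ENNReal.ofReal r :=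
  sInf_le ⟨r, hr, rfl, h⟩

private lemma beta_pos (hC : IsClosed C) (hproper : C ∩ (-C) = {0})
    (x : X) {y : X} (hy : y ∈ C) (hy0 : y ≠ 0) : hilbertBeta C x y ≠ 0 := by
  intro h
  have hex : ∀ n : ℕ, ∃ r : ℝ, 0 < r ∧ r < 1/(n+1) ∧ r • x - y ∈ C := by
    intro n
    have hpos : (0:ℝ≥0∞) < ENNReal.ofReal (1/(n+1)) := by
      rw [ENNReal.ofReal_pos]; positivity
    have hlt : hilbertBeta C x y < ENNReal.ofReal (1/(n+1)) := by rw [h]; exact hpos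
    rw [hilbertBeta] at hlt
    obtain ⟨e, ⟨r, hr, rfl, hrC⟩, hlt⟩ := sInf_lt_iff.1 hlt
    exact ⟨r, hr, (ENNReal.ofReal_lt_ofReal_iff (by positivity)).1 hlt, hrC⟩
  choose f hf1 hf2 hf3 using hex
  have hf0 : Filter.Tendsto f Filter.atTop (nhds 0) :=
    squeeze_zero (fun n => (hf1 n).le) (fun n => (hf2 n).le)
      tendsto_one_div_add_atTop_nhds_zero_nat
  have hft : Filter.Tendsto (fun n => f n • x - y) Filter.atTop (nhds (-y)) := by
    have := (hf0.smul_const x).sub (tendsto_const_nhds (x := y))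
    simpa using this
  have hmem : -y ∈ C := hC.mem_of_tendsto hft (Filter.Eventually.of_forall hf3)
  have hyy : y ∈ C ∩ (-C) := ⟨hy, by simpa [Set.mem_neg] using hmem⟩
  rw [hproper] at hyy
  exact hy0 hyy

private lemma beta_attained (hC : IsClosed C) {x y : X}
    (htop : hilbertBeta C x y ≠ ⊤) (h0 : hilbertBeta C x y ≠ 0) :
    ∃ m : ℝ, 0 < m ∧ hilbertBeta C x y = ENNReal.ofReal m ∧ m • x - y ∈ C := by
  set K : Set ℝ := {r | 0 < r ∧ r • x - y ∈ C} with hK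
  have hKne : K.Nonempty := by
    by_contra hne
    rw [Set.not_nonempty_iff_eq_empty] at hne
    apply htop
    rw [hilbertBeta, show {e : ℝ≥0∞ | ∃ r : ℝ, 0 < r ∧ e = ENNReal.ofReal r ∧ r • x - y ∈ C} = ∅
      from Set.eq_empty_iff_forall_notMem.2 (by
        rintro e ⟨r, hr, rfl, hrC⟩
        have : r ∈ K := ⟨hr, hrC⟩
        rw [hne] at this
        exact this),
      sInf_empty]
  have hbdd : BddBelow K := ⟨0, fun r hr => hr.1.le⟩
  set m := sInf K with hm
  have hm0 : 0 ≤ m := le_csInf hKne (fun r hr => hr.1.le)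
  have hmC : m • x - y ∈ C := by
    have hcl : m ∈ closure K := csInf_mem_closure hKne hbdd
    have hcont : Continuous fun r : ℝ => r • x - y :=
      (continuous_id.smul continuous_const).sub continuous_const
    have hsub : closure K ⊆ {r : ℝ | r • x - y ∈ C} :=
      closure_minimal (fun r hr => hr.2) (hC.preimage hcont)
    exact hsub hcl
  have hmpos : 0 < m := by
    rcases hm0.lt_or_eq with h | h
    · exact h
    exfalso; apply h0
    apply le_antisymm _ zero_le
    by_contra hβ
    push_neg at hβ
    obtain ⟨ε, hε0, hεa, hεb⟩ := ENNReal.lt_iff_exists_real_btwn.1 hβ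
    have hε : 0 < ε := ENNReal.ofReal_pos.1 (lt_of_le_of_lt zero_le hεa)
    obtain ⟨r, hrK, hrε⟩ := (csInf_lt_iff hbdd hKne).1 (show sInf K < ε by rw [← hm, ← h]; exact hε)
    have h1 : hilbertBeta C x y ≤ ENNReal.ofReal r := beta_le C hrK.1 hrK.2
    have h2 : ENNReal.ofReal r ≤ ENNReal.ofReal ε := ENNReal.ofReal_le_ofReal hrε.le
    exact absurd (lt_of_le_of_lt (h1.trans h2) hεb) (lt_irrefl _)
  refine ⟨m, hmpos, le_antisymm (sInf_le ⟨m, hmpos, rfl, hmC⟩) ?_, hmC⟩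
  rw [hilbertBeta]
  apply le_sInf
  rintro e ⟨r, hr, rfl, hrC⟩
  exact ENNReal.ofReal_le_ofReal (csInf_le hbdd ⟨hr, hrC⟩)

private lemma one_le_beta_mul (hC : IsClosed C)
    (hadd : ∀ x ∈ C, ∀ y ∈ C, x + y ∈ C)
    (hsmul : ∀ r : ℝ, 0 ≤ r → ∀ x ∈ C, r • x ∈ C)
    (hproper : C ∩ (-C) = {0}) {x y : X}
    (hxC : x ∈ C) (hx0 : x ≠ 0) (hyC : y ∈ C) (hy0 : y ≠ 0) :
    1 ≤ hilbertBeta C x y * hilbertBeta C y x := by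
  have h1 := beta_pos C hC hproper x hyC hy0
  have h2 := beta_pos C hC hproper y hxC hx0
  by_cases ht1 : hilbertBeta C x y = ⊤
  · rw [ht1, ENNReal.top_mul h2]; exact le_top
  by_cases ht2 : hilbertBeta C y x = ⊤
  · rw [ht2, ENNReal.mul_top h1]; exact le_top
  obtain ⟨m1, hm1, he1, hc1⟩ := beta_attained C hC ht1 h1
  obtain ⟨m2, hm2, he2, hc2⟩ := beta_attained C hC ht2 h2
  rw [he1, he2, ← ENNReal.ofReal_mul hm1.le, show (1:ℝ≥0∞) = ENNReal.ofReal 1 by simp]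
  apply ENNReal.ofReal_le_ofReal
  by_contra hlt
  push_neg at hlt
  have hz : (m1*m2 - 1) • x ∈ C := by
    have h3 := hadd _ (hsmul m2 hm2.le _ hc1) _ hc2
    have h4 : m2 • (m1 • x - y) + (m2 • y - x) = (m1*m2 - 1) • x := by module
    rwa [h4] at h3
  have hnx : -x ∈ C := by
    have hpos : 0 < 1 - m1*m2 := by linarith
    have h5 := hsmul (1 - m1*m2)⁻¹ (by positivity) _ hz
    have h6 : (1 - m1*m2)⁻¹ * (m1*m2 - 1) = -1 := by
      rw [inv_mul_eq_div, div_eq_iff hpos.ne']; ring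
    rwa [smul_smul, h6, neg_one_smul] at h5
  have hxx : x ∈ C ∩ (-C) := ⟨hxC, Set.mem_neg.2 hnx⟩
  rw [hproper] at hxx
  exact hx0 hxx

private lemma tanhDist_le_one' (x y : X) : tanhDist C x y ≤ 1 := by
  rw [tanhDist]
  split_ifs with h
  · exact le_refl 1
  · exact tanh_le_one _

private lemma tanhDist_nonneg' (hC : IsClosed C)
    (hadd : ∀ x ∈ C, ∀ y ∈ C, x + y ∈ C)
    (hsmul : ∀ r : ℝ, 0 ≤ r → ∀ x ∈ C, r • x ∈ C)
    (hproper : C ∩ (-C) = {0}) {x y : X}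
    (hxC : x ∈ C) (hx0 : x ≠ 0) (hyC : y ∈ C) (hy0 : y ≠ 0) :
    0 ≤ tanhDist C x y := by
  rw [tanhDist]
  split_ifs with h
  · norm_num
  · apply tanh_nonneg
    apply div_nonneg _ (by norm_num)
    have h1 : (0:EReal) ≤ hilbertDist C x y := by
      rw [hilbertDist, ← ENNReal.log_one]
      exact ENNReal.log_monotone (one_le_beta_mul C hC hadd hsmul hproper hxC hx0 hyC hy0)
    have := EReal.toReal_le_toReal h1 (by simp) h
    simpa using this

/-- The key bound: if `D • p = m2 • w1 + w2`, `D • q = w1 + m1 • w2` with `D = m1*m2-1 > 0`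
and `B1 • w1 - w2 ∈ C`, then `β(p,q) ≤ (1+m1*B1)/(m2+B1)`. -/
private lemma key_bound
    (hsmul : ∀ r : ℝ, 0 ≤ r → ∀ x ∈ C, r • x ∈ C)
    {p q w1 w2 : X} {m1 m2 B1 : ℝ}
    (hm1 : 0 < m1) (hm2 : 0 < m2) (hgt : 1 < m1 * m2) (hB1 : 0 ≤ B1)
    (hDp : (m1*m2 - 1) • p = m2 • w1 + w2)
    (hDq : (m1*m2 - 1) • q = w1 + m1 • w2)
    (hB1C : B1 • w1 - w2 ∈ C) :
    hilbertBeta C p q ≤ ENNReal.ofReal ((1 + m1*B1)/(m2 + B1)) := by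
  set r := (1 + m1*B1)/(m2 + B1) with hr_def
  have hden : 0 < m2 + B1 := by linarith
  have hrpos : 0 < r := by positivity
  have hr : r * (m2 + B1) = 1 + m1*B1 := div_mul_cancel₀ _ hden.ne'
  have hrm1 : r ≤ m1 := by
    rw [hr_def, div_le_iff₀ hden]; nlinarith
  have hD : 0 < m1*m2 - 1 := by linarith
  apply beta_le C hrpos
  -- show r • p - q ∈ C
  have hkey : (m1*m2 - 1) • (r • p - q) = (m1 - r) • (B1 • w1 - w2) := by
    have e1 : (m1*m2 - 1) • (r • p - q) = r • ((m1*m2 - 1) • p) - (m1*m2 - 1) • q := by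
      module
    rw [e1, hDp, hDq]
    match_scalars
    · linear_combination hr
    · ring
  have hmem : (m1*m2 - 1) • (r • p - q) ∈ C := by
    rw [hkey]
    exact hsmul _ (by linarith) _ hB1C
  have := hsmul (m1*m2 - 1)⁻¹ (by positivity) _ hmem
  rwa [inv_smul_smul₀ hD.ne'] at this

end Aux

/-- A linear map preserving `C \ {0}` contracts the `𝒯`-distance by the factor
`τ(L) = sup_{x,y ∈ C\{0}} 𝒯(Lx, Ly)`. -/
theorem stmt5 {X : Type*} [AddCommGroup X] [Module ℝ X] [TopologicalSpace X]
    [IsTopologicalAddGroup X] [ContinuousSMul ℝ X] [LocallyConvexSpace ℝ X]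
    (C : Set X) (hCclosed : IsClosed C)
    (hadd : ∀ x ∈ C, ∀ y ∈ C, x + y ∈ C)
    (hsmul : ∀ r : ℝ, 0 ≤ r → ∀ x ∈ C, r • x ∈ C)
    (hproper : C ∩ (-C) = {0})
    (L : X →ₗ[ℝ] X) (hL : ∀ x ∈ C \ {0}, L x ∈ C \ {0})
    (τ : ℝ)
    (hτ : τ = sSup {t : ℝ | ∃ x ∈ C \ {0}, ∃ y ∈ C \ {0}, t = tanhDist C (L x) (L y)})
    (x y : X) (hx : x ∈ C \ {0}) (hy : y ∈ C \ {0}) :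
    tanhDist C (L x) (L y) ≤ τ * tanhDist C x y := by
  classical
  have hxC := hx.1
  have hx0 : x ≠ 0 := fun h => hx.2 (by simp [h])
  have hyC := hy.1
  have hy0 : y ≠ 0 := fun h => hy.2 (by simp [h])
  have h0C : (0:X) ∈ C := by
    have h : (0:X) ∈ C ∩ (-C) := by rw [hproper]; exact Set.mem_singleton 0
    exact h.1
  -- facts about τ
  have hbdd : BddAbove {t : ℝ | ∃ x ∈ C \ {0}, ∃ y ∈ C \ {0}, t = tanhDist C (L x) (L y)} := by
    refine ⟨1, ?_⟩
    rintro t ⟨a, ha, b, hb, rfl⟩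
    exact tanhDist_le_one' C _ _
  have hmemτ : ∀ u v, u ∈ C \ {0} → v ∈ C \ {0} → tanhDist C (L u) (L v) ≤ τ := by
    intro u v hu hv
    rw [hτ]
    exact le_csSup hbdd ⟨u, hu, v, hv, rfl⟩
  have hLmem : ∀ z, z ∈ C \ {0} → L z ∈ C ∧ L z ≠ 0 := by
    intro z hz
    obtain ⟨h1, h2⟩ := hL z hz
    exact ⟨h1, fun h => h2 (by simp [h])⟩
  obtain ⟨hLxC, hLx0⟩ := hLmem x hx
  obtain ⟨hLyC, hLy0⟩ := hLmem y hy
  have hτ0 : 0 ≤ τ :=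
    le_trans (tanhDist_nonneg' C hCclosed hadd hsmul hproper hLxC hLx0 hLxC hLx0)
      (hmemτ x x hx hx)
  by_cases hT : hilbertDist C x y = ⊤
  · have h1 : tanhDist C x y = 1 := by rw [tanhDist, if_pos hT]
    rw [h1, mul_one]
    exact hmemτ x y hx hy
  -- finite case
  have hprodne : hilbertBeta C x y * hilbertBeta C y x ≠ ⊤ := by
    intro h
    exact hT (by rw [hilbertDist, h, ENNReal.log_top])
  have hb1ne0 := beta_pos C hCclosed hproper x hyC hy0
  have hb2ne0 := beta_pos C hCclosed hproper y hxC hx0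
  have hb1ne : hilbertBeta C x y ≠ ⊤ := fun h => hprodne (by rw [h, ENNReal.top_mul hb2ne0])
  have hb2ne : hilbertBeta C y x ≠ ⊤ := fun h => hprodne (by rw [h, ENNReal.mul_top hb1ne0])
  obtain ⟨m1, hm1, he1, hc1⟩ := beta_attained C hCclosed hb1ne hb1ne0
  obtain ⟨m2, hm2, he2, hc2⟩ := beta_attained C hCclosed hb2ne hb2ne0
  have hm12 : 1 ≤ m1 * m2 := by
    have h := one_le_beta_mul C hCclosed hadd hsmul hproper hxC hx0 hyC hy0
    rw [he1, he2, ← ENNReal.ofReal_mul hm1.le, ENNReal.one_le_ofReal] at h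
    exact h
  have hdxy : hilbertDist C x y = ((Real.log (m1*m2) : ℝ) : EReal) := by
    rw [hilbertDist, he1, he2, ← ENNReal.ofReal_mul hm1.le,
      ENNReal.log_ofReal_of_pos (by positivity)]
  have hTxy : tanhDist C x y = Real.tanh (Real.log (m1*m2)/4) := by
    rw [tanhDist, if_neg (by rw [hdxy]; exact EReal.coe_ne_top _), hdxy, EReal.toReal_coe]
  by_cases hone : m1 * m2 = 1
  · -- degenerate case : y = m1 • x
    have hsum : m2 • (m1 • x - y) + (m2 • y - x) = (m1*m2 - 1) • x := by module
    rw [hone, sub_self, zero_smul] at hsum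
    have hmemneg : m2 • (m1 • x - y) ∈ C ∩ (-C) := by
      refine ⟨hsmul m2 hm2.le _ hc1, Set.mem_neg.2 ?_⟩
      rw [neg_eq_of_add_eq_zero_right hsum]
      exact hc2
    rw [hproper] at hmemneg
    have hyx : y = m1 • x := by
      have h := congrArg (fun z => m2⁻¹ • z) hmemneg
      simp only [inv_smul_smul₀ hm2.ne', smul_zero] at h
      have := sub_eq_zero.1 h
      exact this.symm
    have hRHS : tanhDist C x y = 0 := by
      rw [hTxy, hone, Real.log_one, zero_div, Real.tanh_zero]
    rw [hRHS, mul_zero]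
    -- LHS = 0
    have hLy : L y = m1 • L x := by rw [hyx, map_smul]
    have hβa : hilbertBeta C (L x) (L y) ≤ ENNReal.ofReal m1 := by
      apply beta_le C hm1
      rw [hLy, sub_self]
      exact h0C
    have hβb : hilbertBeta C (L y) (L x) ≤ ENNReal.ofReal m1⁻¹ := by
      apply beta_le C (by positivity)
      rw [hLy, inv_smul_smul₀ hm1.ne', sub_self]
      exact h0C
    have hple : hilbertBeta C (L x) (L y) * hilbertBeta C (L y) (L x) ≤ 1 := by
      calc hilbertBeta C (L x) (L y) * hilbertBeta C (L y) (L x)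
          ≤ ENNReal.ofReal m1 * ENNReal.ofReal m1⁻¹ := mul_le_mul' hβa hβb
        _ = ENNReal.ofReal (m1 * m1⁻¹) := (ENNReal.ofReal_mul hm1.le).symm
        _ = 1 := by rw [mul_inv_cancel₀ hm1.ne', ENNReal.ofReal_one]
    have hpge := one_le_beta_mul C hCclosed hadd hsmul hproper hLxC hLx0 hLyC hLy0
    have hpeq : hilbertBeta C (L x) (L y) * hilbertBeta C (L y) (L x) = 1 :=
      le_antisymm hple hpge
    have hdL : hilbertDist C (L x) (L y) = 0 := by
      rw [hilbertDist, hpeq, ENNReal.log_one]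
    rw [tanhDist, if_neg (by rw [hdL]; exact EReal.zero_ne_top), hdL]
    simp [Real.tanh_zero]
  -- main case
  have hgt : 1 < m1 * m2 := lt_of_le_of_ne hm12 (Ne.symm hone)
  set u := m1 • x - y with hu_def
  set v := m2 • y - x with hv_def
  have hu0 : u ≠ 0 := by
    intro h
    have hyx : y = m1 • x := (sub_eq_zero.1 h).symm
    have hb : hilbertBeta C y x ≤ ENNReal.ofReal m1⁻¹ := by
      apply beta_le C (by positivity)
      rw [hyx, inv_smul_smul₀ hm1.ne', sub_self]
      exact h0C
    rw [he2] at hb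
    have h2 : m2 ≤ m1⁻¹ := (ENNReal.ofReal_le_ofReal_iff (by positivity)).1 hb
    have : m1 * m2 ≤ 1 := by
      calc m1 * m2 ≤ m1 * m1⁻¹ := by nlinarith
        _ = 1 := mul_inv_cancel₀ hm1.ne'
    linarith
  have hv0 : v ≠ 0 := by
    intro h
    have hxy : x = m2 • y := (sub_eq_zero.1 h).symm
    have hb : hilbertBeta C x y ≤ ENNReal.ofReal m2⁻¹ := by
      apply beta_le C (by positivity)
      rw [hxy, inv_smul_smul₀ hm2.ne', sub_self]
      exact h0C
    rw [he1] at hb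
    have h2 : m1 ≤ m2⁻¹ := (ENNReal.ofReal_le_ofReal_iff (by positivity)).1 hb
    have : m1 * m2 ≤ 1 := by
      calc m1 * m2 ≤ m2⁻¹ * m2 := by nlinarith
        _ = 1 := inv_mul_cancel₀ hm2.ne'
    linarith
  have huD : u ∈ C \ {0} := ⟨hc1, by simp [hu0]⟩
  have hvD : v ∈ C \ {0} := ⟨hc2, by simp [hv0]⟩
  obtain ⟨hw1C, hw1n⟩ := hLmem u huD
  obtain ⟨hw2C, hw2n⟩ := hLmem v hvD
  set w1 := L u with hw1_def
  set w2 := L v with hw2_def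
  have hDx : (m1*m2 - 1) • (L x) = m2 • w1 + w2 := by
    have h1 : (m1*m2 - 1) • x = m2 • u + v := by rw [hu_def, hv_def]; module
    calc (m1*m2 - 1) • (L x) = L ((m1*m2 - 1) • x) := (map_smul L _ x).symm
      _ = L (m2 • u + v) := by rw [h1]
      _ = m2 • w1 + w2 := by rw [map_add, map_smul]
  have hDy : (m1*m2 - 1) • (L y) = w1 + m1 • w2 := by
    have h1 : (m1*m2 - 1) • y = u + m1 • v := by rw [hu_def, hv_def]; module
    calc (m1*m2 - 1) • (L y) = L ((m1*m2 - 1) • y) := (map_smul L _ y).symm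
      _ = L (u + m1 • v) := by rw [h1]
      _ = w1 + m1 • w2 := by rw [map_add, map_smul]
  have hDpos : 0 < m1*m2 - 1 := by linarith
  -- beta bounds for the images
  have hB1n0 := beta_pos C hCclosed hproper w1 hw2C hw2n
  have hB2n0 := beta_pos C hCclosed hproper w2 hw1C hw1n
  -- bound in the case β(w1,w2) = ⊤ : m1 works
  have htop_bound1 : hilbertBeta C (L x) (L y) ≤ ENNReal.ofReal m1 := by
    apply beta_le C hm1
    have hkey : (m1*m2 - 1) • (m1 • L x - L y) = (m1*m2 - 1) • w1 := by
      have e1 : (m1*m2 - 1) • (m1 • L x - L y)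
          = m1 • ((m1*m2 - 1) • L x) - (m1*m2 - 1) • L y := by module
      rw [e1, hDx, hDy]
      match_scalars <;> ring
    have h := congrArg (fun z => (m1*m2 - 1)⁻¹ • z) hkey
    simp only [inv_smul_smul₀ hDpos.ne'] at h
    rw [h]
    exact hw1C
  have htop_bound2 : hilbertBeta C (L y) (L x) ≤ ENNReal.ofReal m2 := by
    apply beta_le C hm2
    have hkey : (m1*m2 - 1) • (m2 • L y - L x) = (m1*m2 - 1) • w2 := by
      have e1 : (m1*m2 - 1) • (m2 • L y - L x)
          = m2 • ((m1*m2 - 1) • L y) - (m1*m2 - 1) • L x := by module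
      rw [e1, hDx, hDy]
      match_scalars <;> ring
    have h := congrArg (fun z => (m1*m2 - 1)⁻¹ • z) hkey
    simp only [inv_smul_smul₀ hDpos.ne'] at h
    rw [h]
    exact hw2C
  -- obtain real bounds R1 R2 and the final analytic inequality in all cases
  obtain ⟨R1, R2, hR1pos, hR2pos, hbnd1, hbnd2, hfin⟩ :
      ∃ R1 R2 : ℝ, 0 < R1 ∧ 0 < R2 ∧
        hilbertBeta C (L x) (L y) ≤ ENNReal.ofReal R1 ∧
        hilbertBeta C (L y) (L x) ≤ ENNReal.ofReal R2 ∧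
        Real.tanh (Real.log (R1*R2)/4)
          ≤ tanhDist C w1 w2 * Real.tanh (Real.log (m1*m2)/4) := by
    by_cases hB1t : hilbertBeta C w1 w2 = ⊤
    · have hTw : tanhDist C w1 w2 = 1 := by
        rw [tanhDist, if_pos]
        rw [hilbertDist, hB1t, ENNReal.top_mul hB2n0, ENNReal.log_top]
      refine ⟨m1, m2, hm1, hm2, htop_bound1, htop_bound2, ?_⟩
      rw [hTw, one_mul]
    by_cases hB2t : hilbertBeta C w2 w1 = ⊤
    · have hTw : tanhDist C w1 w2 = 1 := by
        rw [tanhDist, if_pos]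
        rw [hilbertDist, hB2t, ENNReal.mul_top hB1n0, ENNReal.log_top]
      obtain ⟨B1, hB1, heB1, hcB1⟩ := beta_attained C hCclosed hB1t hB1n0
      refine ⟨(1 + m1*B1)/(m2 + B1), m2, by positivity, hm2,
        key_bound C hsmul hm1 hm2 hgt hB1.le hDx hDy hcB1, htop_bound2, ?_⟩
      rw [hTw, one_mul]
      apply tanh_mono
      have hden : 0 < m2 + B1 := by linarith
      have hle : (1 + m1*B1)/(m2 + B1) * m2 ≤ m1*m2 := by
        rw [div_mul_eq_mul_div, div_le_iff₀ hden]
        nlinarith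
      have := Real.log_le_log (by positivity : (0:ℝ) < (1 + m1*B1)/(m2 + B1) * m2) hle
      linarith
    · obtain ⟨B1, hB1, heB1, hcB1⟩ := beta_attained C hCclosed hB1t hB1n0
      obtain ⟨B2, hB2, heB2, hcB2⟩ := beta_attained C hCclosed hB2t hB2n0
      have hB12 : 1 ≤ B1 * B2 := by
        have h := one_le_beta_mul C hCclosed hadd hsmul hproper hw1C hw1n hw2C hw2n
        rw [heB1, heB2, ← ENNReal.ofReal_mul hB1.le, ENNReal.one_le_ofReal] at h
        exact h
      have hTw : tanhDist C w1 w2 = Real.tanh (Real.log (B1*B2)/4) := by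
        have hdw : hilbertDist C w1 w2 = ((Real.log (B1*B2) : ℝ) : EReal) := by
          rw [hilbertDist, heB1, heB2, ← ENNReal.ofReal_mul hB1.le,
            ENNReal.log_ofReal_of_pos (by positivity)]
        rw [tanhDist, if_neg (by rw [hdw]; exact EReal.coe_ne_top _), hdw, EReal.toReal_coe]
      have hDy' : (m2*m1 - 1) • (L y) = m1 • w2 + w1 := by
        rw [show m2*m1 = m1*m2 by ring, hDy]; abel
      have hDx' : (m2*m1 - 1) • (L x) = w2 + m2 • w1 := by
        rw [show m2*m1 = m1*m2 by ring, hDx]; abel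
      refine ⟨(1 + m1*B1)/(m2 + B1), (1 + m2*B2)/(m1 + B2), by positivity, by positivity,
        key_bound C hsmul hm1 hm2 hgt hB1.le hDx hDy hcB1,
        key_bound C hsmul hm2 hm1 (by rw [mul_comm]; exact hgt) hB2.le hDy' hDx' hcB2, ?_⟩
      rw [hTw]
      exact analytic_core hm1 hm2 hB1 hB2 hm12 hB12
  -- common epilogue
  have hprodle : hilbertBeta C (L x) (L y) * hilbertBeta C (L y) (L x)
      ≤ ENNReal.ofReal (R1*R2) := by
    rw [ENNReal.ofReal_mul hR1pos.le]
    exact mul_le_mul' hbnd1 hbnd2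
  have hprodge := one_le_beta_mul C hCclosed hadd hsmul hproper hLxC hLx0 hLyC hLy0
  have hprodnetop : hilbertBeta C (L x) (L y) * hilbertBeta C (L y) (L x) ≠ ⊤ :=
    ne_top_of_le_ne_top ENNReal.ofReal_ne_top hprodle
  set c := (hilbertBeta C (L x) (L y) * hilbertBeta C (L y) (L x)).toReal with hc_def
  have hc1 : 1 ≤ c := by
    have := ENNReal.toReal_mono hprodnetop hprodge
    rwa [ENNReal.toReal_one] at this
  have hcle : c ≤ R1*R2 := by
    have := ENNReal.toReal_mono ENNReal.ofReal_ne_top hprodle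
    rwa [ENNReal.toReal_ofReal (by positivity)] at this
  have hprodc : hilbertBeta C (L x) (L y) * hilbertBeta C (L y) (L x) = ENNReal.ofReal c :=
    (ENNReal.ofReal_toReal hprodnetop).symm
  have hdL : hilbertDist C (L x) (L y) = ((Real.log c : ℝ) : EReal) := by
    rw [hilbertDist, hprodc, ENNReal.log_ofReal_of_pos (by linarith)]
  have hTL : tanhDist C (L x) (L y) = Real.tanh (Real.log c / 4) := by
    rw [tanhDist, if_neg (by rw [hdL]; exact EReal.coe_ne_top _), hdL, EReal.toReal_coe]
  rw [hTL, hTxy]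
  calc Real.tanh (Real.log c / 4) ≤ Real.tanh (Real.log (R1*R2) / 4) := by
        apply tanh_mono
        have := Real.log_le_log (by linarith : (0:ℝ) < c) hcle
        linarith
    _ ≤ tanhDist C w1 w2 * Real.tanh (Real.log (m1*m2)/4) := hfin
    _ ≤ τ * Real.tanh (Real.log (m1*m2)/4) := by
        apply mul_le_mul_of_nonneg_right (hmemτ u v huD hvD)
        have hlog : 0 ≤ Real.log (m1*m2) := Real.log_nonneg hm12
        exact tanh_nonneg (by linarith)
end

section
/- Under the same hypotheses, the Birkhoff contraction theorem holds: H(Lx, Ly) ≤ tanh(Δ(L)/4) · H(x,y) for all x, y ∈ C \ {0}, where Δ(L) = sup over x,y ∈ C\{0} of H(Lx, Ly). -/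
open scoped ENNReal

section Tanh

lemma my_tanh_eq (x : ℝ) : Real.tanh x = 1 - 2 / (Real.exp (2*x) + 1) := by
  have h1 : Real.exp (2*x) = Real.exp x * Real.exp x := by rw [two_mul, Real.exp_add]
  have h2 : Real.exp (-x) = (Real.exp x)⁻¹ := Real.exp_neg x
  have h3 : (0:ℝ) < Real.exp x := Real.exp_pos x
  rw [Real.tanh_eq_sinh_div_cosh, Real.sinh_eq, Real.cosh_eq, h1, h2]
  have h4 : Real.exp x + (Real.exp x)⁻¹ ≠ 0 := by positivity
  field_simp
  ring

lemma my_tanh_mono : Monotone Real.tanh := by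
  intro a b hab
  rw [my_tanh_eq, my_tanh_eq]
  have : Real.exp (2*a) ≤ Real.exp (2*b) := Real.exp_le_exp.2 (by linarith)
  have h1 : (0:ℝ) < Real.exp (2*a) + 1 := by positivity
  gcongr

lemma my_tanh_nonneg {x : ℝ} (hx : 0 ≤ x) : 0 ≤ Real.tanh x := by
  have := my_tanh_mono hx
  simpa [Real.tanh_zero] using this

lemma my_tanh_pos {x : ℝ} (hx : 0 < x) : 0 < Real.tanh x := by
  rw [my_tanh_eq]
  have h1 : Real.exp (2*x) > 1 := by
    rw [show (1:ℝ) = Real.exp 0 by simp]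
    exact Real.exp_lt_exp.2 (by linarith)
  have h2 : (0:ℝ) < Real.exp (2*x) + 1 := by positivity
  rw [sub_pos, div_lt_one h2]
  linarith

lemma my_tanh_log (w : ℝ) (hw : 1 ≤ w) :
    Real.tanh (Real.log w / 4) = (Real.sqrt w - 1) / (Real.sqrt w + 1) := by
  have hw0 : (0:ℝ) < w := lt_of_lt_of_le one_pos hw
  have hs : Real.sqrt w = Real.exp (2 * (Real.log w / 4)) := by
    rw [Real.sqrt_eq_rpow, Real.rpow_def_of_pos hw0]
    ring_nf
  have hpos : (0:ℝ) < Real.sqrt w + 1 := by positivity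
  rw [my_tanh_eq, ← hs]
  field_simp
  ring

end Tanh

section Analytic

lemma frac_bound' (E a b : ℝ) (hE : 0 < E) (ha : 0 < a) (hab : a ≤ b) :
    E/(E+a^2) - E/(E+b^2) ≤ (b - a)/(b + a) := by
  have hb : 0 < b := lt_of_lt_of_le ha hab
  have h1 : E/(E+a^2) - E/(E+b^2) = E*(b^2-a^2)/((E+a^2)*(E+b^2)) := by
    field_simp
    ring
  rw [h1, div_le_div_iff₀ (by positivity) (by positivity)]
  nlinarith [mul_nonneg (sub_nonneg.2 hab) (sq_nonneg (E - a*b))]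

lemma frac_bound (E p q : ℝ) (hE : 0 < E) (hp : 0 < p) (hpq : p ≤ q) :
    E/(E+p) - E/(E+q) ≤ (Real.sqrt q - Real.sqrt p)/(Real.sqrt q + Real.sqrt p) := by
  have hq : 0 < q := lt_of_lt_of_le hp hpq
  have e1 : Real.sqrt p ^ 2 = p := Real.sq_sqrt hp.le
  have e2 : Real.sqrt q ^ 2 = q := Real.sq_sqrt hq.le
  have := frac_bound' E (Real.sqrt p) (Real.sqrt q) hE (Real.sqrt_pos.2 hp)
    (Real.sqrt_le_sqrt hpq)
  rwa [e1, e2] at this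

lemma birkhoff_mono (p q c : ℝ) (hp : 0 < p) (hpq : p ≤ q)
    (hc : (Real.sqrt q - Real.sqrt p)/(Real.sqrt q + Real.sqrt p) ≤ c) :
    Monotone (fun s => c*s - (Real.log (Real.exp s + p) - Real.log (Real.exp s + q))) := by
  have hq : 0 < q := lt_of_lt_of_le hp hpq
  have hd : ∀ s : ℝ, HasDerivAt
      (fun s => c*s - (Real.log (Real.exp s + p) - Real.log (Real.exp s + q)))
      (c - (Real.exp s/(Real.exp s + p) - Real.exp s/(Real.exp s + q))) s := by
    intro s
    have hE := Real.exp_pos s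
    have h1 : HasDerivAt (fun s => Real.log (Real.exp s + p)) (Real.exp s/(Real.exp s + p)) s :=
      ((Real.hasDerivAt_exp s).add_const p).log (by positivity)
    have h2 : HasDerivAt (fun s => Real.log (Real.exp s + q)) (Real.exp s/(Real.exp s + q)) s :=
      ((Real.hasDerivAt_exp s).add_const q).log (by positivity)
    have h3 : HasDerivAt (fun s : ℝ => c*s) c s := by
      simpa using (hasDerivAt_id s).const_mul c
    exact h3.sub (h1.sub h2)
  apply monotone_of_deriv_nonneg
  · exact fun s => ((hd s).differentiableAt)
  · intro s
    rw [(hd s).deriv]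
    have := frac_bound (Real.exp s) p q (Real.exp_pos s) hp hpq
    linarith

lemma birkhoff_real (p q lam mu D : ℝ) (hp : 0 < p) (hpq : p ≤ q) (hlam : 0 < lam)
    (hlm : lam < mu) (hD : Real.log (q / p) ≤ D) :
    Real.log ((mu + lam * p) / (1 + p) * ((q + 1) / (lam * q + mu)))
      ≤ Real.tanh (D / 4) * Real.log (mu / lam) := by
  have hq : 0 < q := lt_of_lt_of_le hp hpq
  have hmu : 0 < mu := hlam.trans hlm
  set c := Real.tanh (D/4) with hcdef
  have hw : 1 ≤ q / p := (one_le_div hp).2 hpq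
  have hsp : 0 < Real.sqrt p := Real.sqrt_pos.2 hp
  have hsq : 0 < Real.sqrt q := Real.sqrt_pos.2 hq
  have hcb : (Real.sqrt q - Real.sqrt p)/(Real.sqrt q + Real.sqrt p) ≤ c := by
    have h1 : Real.tanh (Real.log (q/p) / 4) ≤ c := my_tanh_mono (by linarith)
    rw [my_tanh_log _ hw] at h1
    rw [Real.sqrt_div hq.le] at h1
    have heq : (Real.sqrt q / Real.sqrt p - 1) / (Real.sqrt q / Real.sqrt p + 1)
        = (Real.sqrt q - Real.sqrt p)/(Real.sqrt q + Real.sqrt p) := by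
      rw [div_eq_div_iff (by positivity) (by positivity)]
      field_simp
    rwa [heq] at h1
  set r := mu / lam with hrdef
  have hr1 : 1 < r := (one_lt_div hlam).2 hlm
  have hr0 : 0 < r := one_pos.trans hr1
  have hs : Real.exp (Real.log r) = r := Real.exp_log hr0
  have key := birkhoff_mono p q c hp hpq hcb (le_of_lt (Real.log_pos hr1) : (0:ℝ) ≤ Real.log r)
  simp only [Real.exp_zero, mul_zero, hs] at key
  have hLHS : (mu + lam*p)/(1+p) * ((1+q)/(lam*q+mu)) = (r+p)/(r+q) * ((1+q)/(1+p)) := by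
    rw [hrdef]
    field_simp
    ring
  rw [show q + 1 = 1 + q from add_comm q 1, hLHS, Real.log_mul (by positivity) (by positivity),
    Real.log_div (by positivity) (by positivity), Real.log_div (by positivity) (by positivity)]
  linarith

end Analytic

section Cone

set_option linter.unusedSectionVars false

variable {X : Type*} [AddCommGroup X] [Module ℝ X] [TopologicalSpace X]
    [IsTopologicalAddGroup X] [ContinuousSMul ℝ X] {C : Set X}

/-- attainment of the infimum defining `hilbertBeta`. -/
lemma hilbertBeta_spec (hCclosed : IsClosed C) (hproper : C ∩ (-C) = {0})
    (x : X) {y : X} (hyC : y ∈ C) (hy : y ≠ 0)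
    (hne : ∃ r : ℝ, 0 < r ∧ r • x - y ∈ C) :
    ∃ m : ℝ, 0 < m ∧ hilbertBeta C x y = ENNReal.ofReal m ∧ m • x - y ∈ C ∧
      ∀ r : ℝ, 0 < r → r • x - y ∈ C → m ≤ r := by
  classical
  set T : Set ℝ := {r : ℝ | 0 < r ∧ r • x - y ∈ C} with hT
  have hTne : T.Nonempty := hne
  have hTbdd : BddBelow T := ⟨0, fun r hr => hr.1.le⟩
  set m := sInf T with hm
  have hm0 : 0 ≤ m := le_csInf hTne (fun r hr => hr.1.le)
  obtain ⟨u, hu_anti, hu_tendsto, hu_mem⟩ := exists_seq_tendsto_sInf hTne hTbdd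
  have hmemC : m • x - y ∈ C := by
    have htend : Filter.Tendsto (fun n => u n • x - y) Filter.atTop (nhds (m • x - y)) :=
      ((hu_tendsto.smul_const x).sub tendsto_const_nhds)
    exact hCclosed.mem_of_tendsto htend (Filter.Eventually.of_forall fun n => (hu_mem n).2)
  have hmpos : 0 < m := by
    rcases hm0.lt_or_eq with h | h
    · exact h
    · exfalso
      rw [← h] at hmemC
      simp only [zero_smul, zero_sub] at hmemC
      have : -y ∈ C ∩ (-C) := ⟨hmemC, by simpa using hyC⟩
      rw [hproper] at this
      simp only [Set.mem_singleton_iff, neg_eq_zero] at this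
      exact hy this
  refine ⟨m, hmpos, ?_, hmemC, fun r hr hrC => csInf_le hTbdd ⟨hr, hrC⟩⟩
  apply le_antisymm
  · exact sInf_le ⟨m, hmpos, rfl, hmemC⟩
  · apply le_sInf
    rintro e ⟨r, hr, rfl, hrC⟩
    exact ENNReal.ofReal_le_ofReal (csInf_le hTbdd ⟨hr, hrC⟩)

lemma hilbertBeta_ne_top_iff {x y : X} (h : hilbertBeta C x y ≠ ⊤) :
    ∃ r : ℝ, 0 < r ∧ r • x - y ∈ C := by
  by_contra hc
  push_neg at hc
  apply h
  rw [hilbertBeta]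
  convert sInf_empty
  · rfl
  rw [Set.eq_empty_iff_forall_notMem]
  rintro e ⟨r, hr, rfl, hrC⟩
  exact hc r hr hrC

lemma hilbertBeta_ne_zero (hCclosed : IsClosed C) (hproper : C ∩ (-C) = {0})
    (x : X) {y : X} (hyC : y ∈ C) (hy : y ≠ 0) :
    hilbertBeta C x y ≠ 0 := by
  by_cases htop : hilbertBeta C x y = ⊤
  · simp [htop]
  · obtain ⟨m, hm, heq, _, _⟩ := hilbertBeta_spec hCclosed hproper x hyC hy
      (hilbertBeta_ne_top_iff htop)
    rw [heq]
    simp [hm, hm.le]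

lemma one_le_hilbertBeta_mul (hCclosed : IsClosed C)
    (hadd : ∀ x ∈ C, ∀ y ∈ C, x + y ∈ C)
    (hsmul : ∀ r : ℝ, 0 ≤ r → ∀ x ∈ C, r • x ∈ C)
    (hproper : C ∩ (-C) = {0})
    {x y : X} (hx : x ∈ C \ {0}) (hy : y ∈ C \ {0}) :
    1 ≤ hilbertBeta C x y * hilbertBeta C y x := by
  obtain ⟨hxC, hx0⟩ := hx
  obtain ⟨hyC, hy0⟩ := hy
  simp only [Set.mem_singleton_iff] at hx0 hy0
  by_cases h1 : hilbertBeta C x y = ⊤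
  · rw [h1, ENNReal.top_mul (hilbertBeta_ne_zero hCclosed hproper y hxC hx0)]
    exact le_top
  by_cases h2 : hilbertBeta C y x = ⊤
  · rw [h2, ENNReal.mul_top (hilbertBeta_ne_zero hCclosed hproper x hyC hy0)]
    exact le_top
  obtain ⟨a, ha, heqa, haC, _⟩ := hilbertBeta_spec hCclosed hproper x hyC hy0
    (hilbertBeta_ne_top_iff h1)
  obtain ⟨b, hb, heqb, hbC, _⟩ := hilbertBeta_spec hCclosed hproper y hxC hx0
    (hilbertBeta_ne_top_iff h2)
  rw [heqa, heqb, ← ENNReal.ofReal_mul ha.le]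
  rw [show (1:ℝ≥0∞) = ENNReal.ofReal 1 by simp]
  apply ENNReal.ofReal_le_ofReal
  by_contra hab
  push_neg at hab
  have hmem1 : (a * b - 1) • x ∈ C := by
    have h3 : b • (a • x - y) ∈ C := hsmul b hb.le _ haC
    have h4 := hadd _ h3 _ hbC
    have : b • (a • x - y) + (b • y - x) = (a * b - 1) • x := by
      simp only [smul_sub, smul_smul, sub_smul, one_smul]
      abel_nf
      rw [mul_comm b a]
      abel
    rwa [this] at h4
  have hmem2 : (1 - a * b) • x ∈ C := hsmul _ (by linarith) _ hxC
  have : (1 - a * b) • x ∈ C ∩ (-C) := ⟨hmem2, by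
    rw [Set.mem_neg, ← neg_smul, show -(1 - a * b) = a * b - 1 by ring]
    exact hmem1⟩
  rw [hproper] at this
  simp only [Set.mem_singleton_iff, smul_eq_zero] at this
  rcases this with h | h
  · linarith
  · exact hx0 h

lemma hilbertDist_nonneg (hCclosed : IsClosed C)
    (hadd : ∀ x ∈ C, ∀ y ∈ C, x + y ∈ C)
    (hsmul : ∀ r : ℝ, 0 ≤ r → ∀ x ∈ C, r • x ∈ C)
    (hproper : C ∩ (-C) = {0})
    {x y : X} (hx : x ∈ C \ {0}) (hy : y ∈ C \ {0}) :
    0 ≤ hilbertDist C x y := by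
  rw [hilbertDist, ENNReal.zero_le_log_iff]
  exact one_le_hilbertBeta_mul hCclosed hadd hsmul hproper hx hy

lemma hilbertBeta_smul_self (hsmul : ∀ r : ℝ, 0 ≤ r → ∀ x ∈ C, r • x ∈ C)
    (hproper : C ∩ (-C) = {0})
    {z : X} (hz : z ∈ C \ {0}) {a : ℝ} (ha : 0 < a) :
    hilbertBeta C z (a • z) = ENNReal.ofReal a := by
  obtain ⟨hzC, hz0⟩ := hz
  simp only [Set.mem_singleton_iff] at hz0
  apply le_antisymm
  · apply sInf_le
    refine ⟨a, ha, rfl, ?_⟩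
    simp only [sub_self]
    have : (0:X) ∈ C ∩ (-C) := by rw [hproper]; rfl
    exact this.1
  · apply le_sInf
    rintro e ⟨r, hr, rfl, hrC⟩
    apply ENNReal.ofReal_le_ofReal
    by_contra hra
    push_neg at hra
    have h1 : (r - a) • z ∈ C := by rwa [← sub_smul] at hrC
    have h2 : (a - r) • z ∈ C := hsmul _ (by linarith) _ hzC
    have : (a - r) • z ∈ C ∩ (-C) := ⟨h2, by
      rw [Set.mem_neg, ← neg_smul, show -(a - r) = r - a by ring]
      exact h1⟩
    rw [hproper] at this
    simp only [Set.mem_singleton_iff, smul_eq_zero] at this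
    rcases this with h | h
    · linarith
    · exact hz0 h

lemma hilbertDist_smul_self (hsmul : ∀ r : ℝ, 0 ≤ r → ∀ x ∈ C, r • x ∈ C)
    (hproper : C ∩ (-C) = {0})
    {z : X} (hz : z ∈ C \ {0}) {a : ℝ} (ha : 0 < a) :
    hilbertDist C z (a • z) = 0 := by
  have h1 := hilbertBeta_smul_self hsmul hproper hz ha
  have hz' : a • z ∈ C \ {0} := by
    obtain ⟨hzC, hz0⟩ := hz
    simp only [Set.mem_singleton_iff] at hz0
    exact ⟨hsmul a ha.le z hzC, by simp [smul_eq_zero, ha.ne', hz0]⟩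
  have h2 : hilbertBeta C (a • z) z = ENNReal.ofReal a⁻¹ := by
    have := hilbertBeta_smul_self hsmul hproper hz' (a := a⁻¹) (by positivity)
    rwa [smul_smul, inv_mul_cancel₀ ha.ne', one_smul] at this
  rw [hilbertDist, h1, h2, ← ENNReal.ofReal_mul ha.le, mul_inv_cancel₀ ha.ne']
  simp

end Cone

/-- Birkhoff's contraction theorem: if `L` is linear, maps `C \ {0}` into itself, and
the projective diameter `Δ(L) = sup_{x,y∈C\{0}} H(Lx,Ly)` is finite, then
`H(Lx, Ly) ≤ tanh(Δ(L)/4) · H(x,y)`. -/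
theorem stmt6 {X : Type*} [AddCommGroup X] [Module ℝ X] [TopologicalSpace X]
    [IsTopologicalAddGroup X] [ContinuousSMul ℝ X] [LocallyConvexSpace ℝ X]
    (C : Set X) (hCclosed : IsClosed C)
    (hadd : ∀ x ∈ C, ∀ y ∈ C, x + y ∈ C)
    (hsmul : ∀ r : ℝ, 0 ≤ r → ∀ x ∈ C, r • x ∈ C)
    (hproper : C ∩ (-C) = {0})
    (L : X →ₗ[ℝ] X) (hL : ∀ x ∈ C \ {0}, L x ∈ C \ {0})
    (Δ : EReal)
    (hΔ : Δ = sSup {d : EReal | ∃ x ∈ C \ {0}, ∃ y ∈ C \ {0}, d = hilbertDist C (L x) (L y)})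
    (hΔfin : Δ ≠ ⊤)
    (x y : X) (hx : x ∈ C \ {0}) (hy : y ∈ C \ {0}) :
    hilbertDist C (L x) (L y) ≤ (Real.tanh (Δ.toReal / 4) : EReal) * hilbertDist C x y := by
  have hLx := hL x hx
  have hLy := hL y hy
  have hLle : hilbertDist C (L x) (L y) ≤ Δ := by
    rw [hΔ]; exact le_sSup ⟨x, hx, y, hy, rfl⟩
  have hΔ0 : 0 ≤ Δ :=
    le_trans (hilbertDist_nonneg hCclosed hadd hsmul hproper hLx hLy) hLle
  have hΔbot : Δ ≠ ⊥ := fun h => by rw [h] at hΔ0; exact absurd hΔ0 (by simp)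
  have hΔreal : ((Δ.toReal : ℝ) : EReal) = Δ := EReal.coe_toReal hΔfin hΔbot
  have hΔtR0 : 0 ≤ Δ.toReal := by
    rw [← hΔreal] at hΔ0
    exact_mod_cast hΔ0
  have hx0 : x ≠ 0 := by simpa using hx.2
  have hy0 : y ≠ 0 := by simpa using hy.2
  by_cases hfin : hilbertDist C x y = ⊤
  · rcases eq_or_lt_of_le hΔ0 with hΔz | hΔpos
    · have ht : Real.tanh (Δ.toReal / 4) = 0 := by
        have h0 : Δ.toReal = 0 := by rw [← hΔz]; simp
        rw [h0]
        norm_num [Real.tanh_zero]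
      rw [ht]
      simp only [EReal.coe_zero, zero_mul]
      exact hLle.trans (le_of_eq hΔz.symm)
    · have htR : 0 < Δ.toReal := by
        rw [← hΔreal] at hΔpos
        exact_mod_cast hΔpos
      have htanh : 0 < Real.tanh (Δ.toReal/4) := my_tanh_pos (by linarith)
      rw [hfin, EReal.mul_top_of_pos (by exact_mod_cast htanh)]
      exact le_top
  · -- finite case
    have hprod_ne_top : hilbertBeta C x y * hilbertBeta C y x ≠ ⊤ := by
      intro h
      rw [hilbertDist, h] at hfin
      exact hfin ENNReal.log_top
    have hb1top : hilbertBeta C x y ≠ ⊤ := fun h => hprod_ne_top (by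
      rw [h, ENNReal.top_mul (hilbertBeta_ne_zero hCclosed hproper y hx.1 hx0)])
    have hb2top : hilbertBeta C y x ≠ ⊤ := fun h => hprod_ne_top (by
      rw [h, ENNReal.mul_top (hilbertBeta_ne_zero hCclosed hproper x hy.1 hy0)])
    obtain ⟨a, ha, heqa, haC, hamin⟩ := hilbertBeta_spec hCclosed hproper x hy.1 hy0
      (hilbertBeta_ne_top_iff hb1top)
    obtain ⟨b, hb, heqb, hbC, hbmin⟩ := hilbertBeta_spec hCclosed hproper y hx.1 hx0
      (hilbertBeta_ne_top_iff hb2top)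
    have hab1 : 1 ≤ a * b := by
      have h1 := one_le_hilbertBeta_mul hCclosed hadd hsmul hproper hx hy
      rw [heqa, heqb, ← ENNReal.ofReal_mul ha.le] at h1
      exact_mod_cast ENNReal.one_le_ofReal.1 h1
    have hdistxy : hilbertDist C x y = ((Real.log (a*b) : ℝ) : EReal) := by
      rw [hilbertDist, heqa, heqb, ← ENNReal.ofReal_mul ha.le,
        ENNReal.log_ofReal_of_pos (by positivity)]
    rcases eq_or_lt_of_le hab1 with habe | habl
    · -- a*b = 1 : then y = a • x and both sides vanish
      have hyax : y = a • x := by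
        have h3 : b • (a • x - y) ∈ C := hsmul b hb.le _ haC
        have key : b • (a • x - y) ∈ C ∩ (-C) := by
          refine ⟨h3, ?_⟩
          rw [Set.mem_neg]
          have hneg : -(b • (a • x - y)) = b • y - x := by
            rw [smul_sub, neg_sub, smul_smul, mul_comm b a, ← habe, one_smul]
          rw [hneg]
          exact hbC
        rw [hproper] at key
        simp only [Set.mem_singleton_iff, smul_eq_zero, sub_eq_zero] at key
        rcases key with h | h
        · exact absurd h hb.ne'
        · exact h.symm
      rw [hyax, map_smul, hilbertDist_smul_self hsmul hproper hLx ha,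
        hilbertDist_smul_self hsmul hproper hx ha]
      simp
    · -- 1 < a * b : the genuine case
      set lam : ℝ := b⁻¹ with hlamdef
      set mu : ℝ := a with hmudef
      have hlam : 0 < lam := by positivity
      have hlm : lam < mu := by
        rw [hlamdef, hmudef, ← one_div, div_lt_iff₀ hb]
        linarith [mul_comm a b]
      set u : X := y - lam • x with hudef
      set v : X := mu • x - y with hvdef
      have huC : u ∈ C := by
        have h1 : b⁻¹ • (b • y - x) ∈ C := hsmul _ (by positivity) _ hbC
        rwa [smul_sub, smul_smul, inv_mul_cancel₀ hb.ne', one_smul] at h1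
      have hu0 : u ≠ 0 := by
        intro h
        rw [hudef, sub_eq_zero] at h
        have := hamin lam hlam (by rw [← h]; simpa using (show (0:X) ∈ C by
          have : (0:X) ∈ C ∩ (-C) := by rw [hproper]; rfl
          exact this.1))
        rw [hlamdef] at this
        have : a * b ≤ 1 := by
          calc a * b ≤ b⁻¹ * b := by nlinarith
          _ = 1 := inv_mul_cancel₀ hb.ne'
        linarith
      have hv0 : v ≠ 0 := by
        intro h
        rw [hvdef, sub_eq_zero] at h
        have h2 : a⁻¹ • y - x = 0 := by
          rw [← h, hmudef, smul_smul, inv_mul_cancel₀ ha.ne', one_smul, sub_self]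
        have := hbmin a⁻¹ (by positivity) (by rw [h2]; exact (show (0:X) ∈ C by
          have : (0:X) ∈ C ∩ (-C) := by rw [hproper]; rfl
          exact this.1))
        have : a * b ≤ 1 := by
          calc a * b ≤ a * a⁻¹ := by nlinarith
          _ = 1 := mul_inv_cancel₀ ha.ne'
        linarith
      have hu : u ∈ C \ {0} := ⟨huC, by simpa using hu0⟩
      have hv : v ∈ C \ {0} := ⟨haC, by simpa using hv0⟩
      have hLu := hL u hu
      have hLv := hL v hv
      have hWle : hilbertDist C (L u) (L v) ≤ Δ := by
        rw [hΔ]; exact le_sSup ⟨u, hu, v, hv, rfl⟩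
      have hWtop : hilbertDist C (L u) (L v) ≠ ⊤ := fun h => hΔfin (top_le_iff.1 (h ▸ hWle))
      have hLu0 : (L u : X) ≠ 0 := by simpa using hLu.2
      have hLv0 : (L v : X) ≠ 0 := by simpa using hLv.2
      have hWprod : hilbertBeta C (L u) (L v) * hilbertBeta C (L v) (L u) ≠ ⊤ := by
        intro h
        rw [hilbertDist, h] at hWtop
        exact hWtop ENNReal.log_top
      have hq_top : hilbertBeta C (L u) (L v) ≠ ⊤ := fun h => hWprod (by
        rw [h, ENNReal.top_mul (hilbertBeta_ne_zero hCclosed hproper (L v) hLu.1 hLu0)])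
      have hp_top : hilbertBeta C (L v) (L u) ≠ ⊤ := fun h => hWprod (by
        rw [h, ENNReal.mul_top (hilbertBeta_ne_zero hCclosed hproper (L u) hLv.1 hLv0)])
      obtain ⟨q, hqpos, heqq, hqC, _⟩ := hilbertBeta_spec hCclosed hproper (L u) hLv.1 hLv0
        (hilbertBeta_ne_top_iff hq_top)
      obtain ⟨p', hp'pos, heqp', hp'C, _⟩ := hilbertBeta_spec hCclosed hproper (L v) hLu.1 hLu0
        (hilbertBeta_ne_top_iff hp_top)
      have hqp1 : 1 ≤ q * p' := by
        have h1 := one_le_hilbertBeta_mul hCclosed hadd hsmul hproper hLu hLv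
        rw [heqq, heqp', ← ENNReal.ofReal_mul hqpos.le] at h1
        exact_mod_cast ENNReal.one_le_ofReal.1 h1
      obtain ⟨p, hpdef⟩ : ∃ p : ℝ, p = p'⁻¹ := ⟨_, rfl⟩
      have hppos : 0 < p := by rw [hpdef]; positivity
      have hpq : p ≤ q := by
        rw [hpdef, ← one_div, div_le_iff₀ hp'pos]
        linarith
      have hlogD : Real.log (q / p) ≤ Δ.toReal := by
        have hW : hilbertDist C (L u) (L v) = ((Real.log (q * p') : ℝ) : EReal) := by
          rw [hilbertDist, heqq, heqp', ← ENNReal.ofReal_mul hqpos.le,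
            ENNReal.log_ofReal_of_pos (by positivity)]
        rw [hW, ← hΔreal, EReal.coe_le_coe_iff] at hWle
        have hq2 : q / p = q * p' := by rw [hpdef]; field_simp
        rwa [hq2]
      have hppr : p * p' = 1 := by rw [hpdef]; exact inv_mul_cancel₀ hp'pos.ne'
      have h1p : (1:ℝ) + p ≠ 0 := by positivity
      set t1 : ℝ := (mu + lam * p)/(1 + p) with ht1def
      set t2 : ℝ := (q + 1)/(lam * q + mu) with ht2def
      have hmupos : 0 < mu := hlam.trans hlm
      have ht1 : 0 < t1 := by positivity
      have ht2 : 0 < t2 := by positivity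
      have hLu' : (L u : X) = L y - lam • L x := by
        rw [hudef, map_sub, map_smul]
      have hLv' : (L v : X) = mu • L x - L y := by
        rw [hvdef, map_sub, map_smul]
      have hid1 : t1 • L x - L y = (p/(1+p)) • (p' • (L v) - L u) := by
        rw [hLu', hLv', ht1def]
        match_scalars
        · field_simp [h1p]
          linear_combination (-mu) * hppr
        · field_simp [h1p]
          linear_combination hppr
      have hid2 : t2 • L y - L x = ((lam * q + mu)⁻¹) • (q • (L u) - L v) := by
        rw [hLu', hLv', ht2def]
        match_scalars <;> (try field_simp) <;> try ring
      have hmem1 : t1 • L x - L y ∈ C := by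
        rw [hid1]
        exact hsmul _ (by positivity) _ hp'C
      have hmem2 : t2 • L y - L x ∈ C := by
        rw [hid2]
        exact hsmul _ (by positivity) _ hqC
      have hbound1 : hilbertBeta C (L x) (L y) ≤ ENNReal.ofReal t1 :=
        sInf_le ⟨t1, ht1, rfl, hmem1⟩
      have hbound2 : hilbertBeta C (L y) (L x) ≤ ENNReal.ofReal t2 :=
        sInf_le ⟨t2, ht2, rfl, hmem2⟩
      have hfinal : hilbertDist C (L x) (L y) ≤ ((Real.log (t1*t2) : ℝ) : EReal) := by
        rw [hilbertDist, ← ENNReal.log_ofReal_of_pos (by positivity),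
          ENNReal.ofReal_mul ht1.le]
        exact ENNReal.log_monotone (mul_le_mul' hbound1 hbound2)
      refine hfinal.trans ?_
      rw [hdistxy, ← EReal.coe_mul, EReal.coe_le_coe_iff]
      have hab : a * b = mu / lam := by
        rw [hmudef, hlamdef]
        field_simp
      rw [hab]
      exact birkhoff_real p q lam mu Δ.toReal hppos hpq hlam hlm hlogD
end

section
/- Let E be a metrizable topological space with Borel σ-algebra. A finite signed Borel measure μ on E is nonnegative if and only if ∫ f dμ ≥ 0 for every bounded continuous function f : E → ℝ₊. -/
open MeasureTheory

/-- A finite signed Borel measure on a metrizable space is nonnegative if and only if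
`∫ f dμ ≥ 0` for every bounded continuous function `f : E → ℝ₊`. -/
theorem stmt8 {E : Type*} [TopologicalSpace E] [TopologicalSpace.MetrizableSpace E]
    [MeasurableSpace E] [BorelSpace E] (μ : SignedMeasure E) :
    0 ≤ μ ↔
      ∀ f : E → ℝ, Continuous f → (∃ M : ℝ, ∀ x, f x ≤ M) → (∀ x, 0 ≤ f x) →
        0 ≤ (∫ x, f x ∂μ.toJordanDecomposition.posPart)
              - ∫ x, f x ∂μ.toJordanDecomposition.negPart := by
  set π := μ.toJordanDecomposition.posPart with hπdef
  set ν := μ.toJordanDecomposition.negPart with hνdef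
  obtain ⟨S, hSm, hS1, hS2⟩ := μ.toJordanDecomposition.mutuallySingular
  have happ : ∀ i : Set E, MeasurableSet i → μ i = (π i).toReal - (ν i).toReal := by
    intro i hi
    conv_lhs => rw [← μ.toSignedMeasure_toJordanDecomposition]
    rw [JordanDecomposition.toSignedMeasure, Measure.toSignedMeasure_sub_apply hi]
    rfl
  constructor
  · intro hμ f hf _ hfpos
    -- first show ν = 0
    have hμS : 0 ≤ μ S := by
      have := hμ S hSm
      simpa using this
    have hνS : ν S = 0 := by
      rw [happ S hSm, hS1] at hμS
      simp only [ENNReal.toReal_zero, zero_sub, Left.nonneg_neg_iff] at hμS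
      have := ENNReal.toReal_nonneg (a := ν S)
      have h0 : (ν S).toReal = 0 := le_antisymm hμS this
      exact (ENNReal.toReal_eq_zero_iff _).mp h0 |>.resolve_right (measure_ne_top ν S)
    have hν0 : ν = 0 := by
      rw [← Measure.measure_univ_eq_zero]
      refine le_antisymm ?_ (zero_le)
      have h1 := measure_union_le (μ := ν) S Sᶜ
      simpa [hνS, show ν Sᶜ = 0 from hS2] using h1
    rw [hν0]
    simp only [integral_zero_measure, sub_zero]
    exact integral_nonneg hfpos
  · intro h
    have hlin : ∀ g : BoundedContinuousFunction E NNReal, ∫⁻ x, (g x : ENNReal) ∂ν ≤ ∫⁻ x, (g x : ENNReal) ∂π := by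
      intro g
      have hcont : Continuous fun x ↦ (g x : ℝ) := NNReal.continuous_coe.comp g.continuous
      have hbd : ∃ M : ℝ, ∀ x, (g x : ℝ) ≤ M := by
        refine ⟨(nndist 0 g : ℝ), fun x ↦ ?_⟩
        exact_mod_cast g.apply_le_nndist_zero x
      have hpos : ∀ x, (0 : ℝ) ≤ (g x : ℝ) := fun x ↦ (g x).coe_nonneg
      have hint := h (fun x ↦ (g x : ℝ)) hcont hbd hpos
      have h1 := g.toReal_lintegral_coe_eq_integral ν
      have h2 := g.toReal_lintegral_coe_eq_integral π
      have hlt1 := BoundedContinuousFunction.lintegral_lt_top_of_nnreal ν g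
      have hlt2 := BoundedContinuousFunction.lintegral_lt_top_of_nnreal π g
      rw [← ENNReal.toReal_le_toReal hlt1.ne hlt2.ne, h1, h2]
      linarith
    have hclosed : ∀ F : Set E, IsClosed F → ν F ≤ π F := by
      intro F hF
      have oν := HasOuterApproxClosed.tendsto_lintegral_apprSeq hF ν
      have oπ := HasOuterApproxClosed.tendsto_lintegral_apprSeq hF π
      exact le_of_tendsto_of_tendsto' oν oπ fun n ↦ hlin _
    have hle : ∀ s : Set E, MeasurableSet s → ν s ≤ π s := by
      intro s hs
      refine ENNReal.le_of_forall_pos_le_add fun ε hε _ ↦ ?_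
      obtain ⟨F, hFs, hFcl, hF⟩ := hs.exists_isClosed_lt_add (measure_ne_top ν s)
        (ENNReal.coe_ne_zero.mpr hε.ne')
      calc ν s ≤ ν F + ε := hF.le
        _ ≤ π F + ε := add_le_add_left (hclosed F hFcl) _
        _ ≤ π s + ε := add_le_add_left (measure_mono hFs) _
    have hν0 : ν = 0 := by
      rw [← Measure.measure_univ_eq_zero]
      refine le_antisymm ?_ (zero_le)
      have h2 : ν S ≤ π S := hle S hSm
      rw [hS1] at h2
      have h1 := measure_union_le (μ := ν) S Sᶜ
      simpa [show ν S = 0 from le_antisymm h2 (zero_le), show ν Sᶜ = 0 from hS2] using h1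
    rw [VectorMeasure.le_iff]
    intro i hi
    rw [VectorMeasure.zero_apply, happ i hi, hν0]
    simp [ENNReal.toReal_nonneg]
end

section
/- For equivalent probability measures μ, ν with bounded Radon–Nikodym derivatives, the total variation distance satisfies ‖μ − ν‖_TV ≤ (2/log 3) · H(μ,ν), where H(μ,ν) = log(‖dμ/dν‖_∞ ‖dν/dμ‖_∞) and ‖μ − ν‖_TV = |μ−ν|(E) ∈ [0,2]. -/
open MeasureTheory
open scoped ENNReal

private lemma key_real (a b t x : ℝ) (ha : 1 ≤ a) (hb : 1 ≤ b)
    (ht0 : 0 ≤ t) (hx : x ≤ a * t) (hc : 1 - t ≤ b * (1 - x)) :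
    2 * (x - t) ≤ (2 / Real.log 3) * Real.log (a * b) := by
  have hL3 : 0 < Real.log 3 := Real.log_pos (by norm_num)
  have hL3' : Real.log 3 ≤ 2 := by
    have := Real.log_le_sub_one_of_pos (show (0:ℝ) < 3 by norm_num); linarith
  have hab1 : 1 ≤ a * b := by nlinarith
  have hlogab : 0 ≤ Real.log (a * b) := Real.log_nonneg hab1
  rcases le_or_gt (x - t) 0 with hD | hD
  · have h0 : 0 ≤ (2 / Real.log 3) * Real.log (a * b) := by positivity
    linarith
  have hd1 : x - t ≤ (a - 1) * t := by nlinarith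
  have hd2 : (x - t) * b ≤ (b - 1) * (1 - t) := by nlinarith
  have key1 : (x - t) * (a * b - 1) ≤ (a - 1) * (b - 1) := by
    nlinarith [mul_le_mul_of_nonneg_right hd2 (by linarith : (0:ℝ) ≤ a - 1),
      mul_le_mul_of_nonneg_right hd1 (by linarith : (0:ℝ) ≤ b - 1)]
  have habnn : (0:ℝ) ≤ a * b := by nlinarith
  set s := Real.sqrt (a * b) with hsdef
  have hs2 : s ^ 2 = a * b := Real.sq_sqrt habnn
  have hs0 : 0 ≤ s := Real.sqrt_nonneg _
  have hs1 : 1 < s := by nlinarith [hd1, hd2]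
  have key2 : (a - 1) * (b - 1) ≤ (s - 1) ^ 2 := by
    have hpa : Real.sqrt a ^ 2 = a := Real.sq_sqrt (by linarith)
    have hpb : Real.sqrt b ^ 2 = b := Real.sq_sqrt (by linarith)
    have hpq : Real.sqrt a * Real.sqrt b = s := (Real.sqrt_mul (by linarith) b).symm
    nlinarith [sq_nonneg (Real.sqrt a - Real.sqrt b), Real.sqrt_nonneg a, Real.sqrt_nonneg b]
  have key3 : s - 1 ≤ s * Real.log s := by
    have h := Real.log_le_sub_one_of_pos (show 0 < s⁻¹ by positivity)
    rw [Real.log_inv] at h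
    have hsi : s * s⁻¹ = 1 := mul_inv_cancel₀ (by linarith)
    nlinarith [mul_le_mul_of_nonneg_left (by linarith : 1 - s⁻¹ ≤ Real.log s) hs0]
  have key4 : Real.log (a * b) = 2 * Real.log s := by
    rw [← hs2, Real.log_pow]; norm_num
  have hlogs : 0 ≤ Real.log s := Real.log_nonneg (by linarith)
  have hq : (x - t) * (s + 1) ≤ s - 1 := by
    have h' : (x - t) * (s + 1) * (s - 1) ≤ (s - 1) * (s - 1) := by nlinarith [key1, key2, hs2]
    exact le_of_mul_le_mul_right h' (by linarith)
  have hDlog : x - t ≤ Real.log s := by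
    have h1 : (x - t) * (s + 1) ≤ Real.log s * (s + 1) := by nlinarith [key3, hlogs]
    exact le_of_mul_le_mul_right h1 (by linarith)
  rw [key4, div_mul_eq_mul_div, le_div_iff₀ hL3]
  nlinarith [mul_le_mul_of_nonneg_left hL3' hD.le, hDlog]

private lemma meas_le_essSup_mul {E : Type*} [MeasurableSpace E] (μ ν : Measure E)
    [IsFiniteMeasure μ] [SigmaFinite ν] (hμν : μ ≪ ν) (s : Set E) :
    μ s ≤ essSup (μ.rnDeriv ν) ν * ν s := by
  rw [← Measure.setLIntegral_rnDeriv hμν s]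
  calc ∫⁻ x in s, μ.rnDeriv ν x ∂ν
      ≤ ∫⁻ _ in s, essSup (μ.rnDeriv ν) ν ∂ν :=
        lintegral_mono_ae (ae_restrict_of_ae (ENNReal.ae_le_essSup _))
    _ = essSup (μ.rnDeriv ν) ν * ν s := setLIntegral_const _ _

/-- Atar–Zeitouni bound: for equivalent probability measures with bounded
Radon–Nikodym derivatives, `‖μ − ν‖_TV ≤ (2 / log 3) · H(μ,ν)`, where
`H(μ,ν) = log(‖dμ/dν‖_∞ ‖dν/dμ‖_∞)` and the total variation norm `|μ−ν|(E)`
is defined via the Hahn–Jordan decomposition (so it takes values in `[0,2]`). -/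
theorem stmt12 {E : Type*} [MeasurableSpace E] (μ ν : Measure E)
    [IsProbabilityMeasure μ] [IsProbabilityMeasure ν] (hμν : μ ≪ ν) (hνμ : ν ≪ μ)
    (h1 : essSup (μ.rnDeriv ν) ν ≠ ⊤) (h2 : essSup (ν.rnDeriv μ) μ ≠ ⊤)
    (H : ℝ)
    (hH : H = Real.log ((essSup (μ.rnDeriv ν) ν).toReal * (essSup (ν.rnDeriv μ) μ).toReal)) :
    (μ.toSignedMeasure - ν.toSignedMeasure).totalVariation Set.univ
      ≤ ENNReal.ofReal ((2 / Real.log 3) * H) := by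
  set sm := μ.toSignedMeasure - ν.toSignedMeasure with hsm
  obtain ⟨i, hi₁, hi₂, hi₃, hpos, hneg⟩ := sm.toJordanDecomposition_spec
  set A := essSup (μ.rnDeriv ν) ν with hA
  set B := essSup (ν.rnDeriv μ) μ with hB
  set a := A.toReal with ha'
  set b := B.toReal with hb'
  set x := (μ i).toReal with hx'
  set t := (ν i).toReal with ht'
  -- basic facts
  have hA1 : 1 ≤ A := by
    have h := meas_le_essSup_mul μ ν hμν Set.univ
    simpa using h
  have hB1 : 1 ≤ B := by
    have h := meas_le_essSup_mul ν μ hνμ Set.univ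
    simpa using h
  have ha1 : 1 ≤ a := by
    have := ENNReal.toReal_mono h1 hA1
    simpa using this
  have hb1 : 1 ≤ b := by
    have := ENNReal.toReal_mono h2 hB1
    simpa using this
  have hxle : x ≤ a * t := by
    have h := meas_le_essSup_mul μ ν hμν i
    have := ENNReal.toReal_mono (ENNReal.mul_ne_top h1 (measure_ne_top ν i)) h
    rwa [ENNReal.toReal_mul] at this
  have hμic : (μ iᶜ).toReal = 1 - x := by
    rw [measure_compl hi₁ (measure_ne_top _ _), measure_univ,
      ENNReal.toReal_sub_of_le prob_le_one ENNReal.one_ne_top, ENNReal.toReal_one]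
  have hνic : (ν iᶜ).toReal = 1 - t := by
    rw [measure_compl hi₁ (measure_ne_top _ _), measure_univ,
      ENNReal.toReal_sub_of_le prob_le_one ENNReal.one_ne_top, ENNReal.toReal_one]
  have hcle : 1 - t ≤ b * (1 - x) := by
    have h := meas_le_essSup_mul ν μ hνμ iᶜ
    have h2' := ENNReal.toReal_mono (ENNReal.mul_ne_top h2 (measure_ne_top μ iᶜ)) h
    rw [ENNReal.toReal_mul, hμic, hνic] at h2'
    exact h2'
  -- value of sm on i
  have hsmi : sm i = x - t := by
    rw [hsm, Measure.toSignedMeasure_sub_apply hi₁]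
    rfl
  have hsmic : sm iᶜ = -(x - t) := by
    rw [hsm, Measure.toSignedMeasure_sub_apply hi₁.compl, measureReal_def, measureReal_def, hμic, hνic]
    ring
  have hsmi0 : 0 ≤ sm i :=
    sm.nonneg_of_zero_le_restrict (sm.zero_le_restrict_subset hi₁ (subset_refl i) hi₂)
  -- total variation value
  have htv : sm.totalVariation Set.univ = ENNReal.ofReal (2 * (x - t)) := by
    rw [SignedMeasure.totalVariation, Measure.add_apply, hpos, hneg,
      SignedMeasure.toMeasureOfZeroLE_apply sm hi₂ hi₁ MeasurableSet.univ,
      SignedMeasure.toMeasureOfLEZero_apply sm hi₃ hi₁.compl MeasurableSet.univ]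
    have e1 : i ∩ Set.univ = i := Set.inter_univ i
    have e2 : iᶜ ∩ Set.univ = iᶜ := Set.inter_univ iᶜ
    have hx0 : 0 ≤ x - t := hsmi ▸ hsmi0
    rw [← ENNReal.ofReal_eq_coe_nnreal, ← ENNReal.ofReal_eq_coe_nnreal]
    rw [e1, e2, hsmi, hsmic, neg_neg, ← ENNReal.ofReal_add hx0 hx0]
    ring_nf
  rw [htv, hH]
  exact ENNReal.ofReal_le_ofReal (key_real a b t x ha1 hb1 ENNReal.toReal_nonneg hxle hcle)
end

section
/- The space of probability measures on a measurable space, equipped with the Hilbert projective metric H (set to ∞ for non-comparable measures), is a complete metric space. -/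
open MeasureTheory Filter
open scoped ENNReal

open scoped Classical in
/-- The Hilbert projective metric on (probability) measures:
`H(μ,ν) = log(‖dμ/dν‖_∞ ‖dν/dμ‖_∞)` when `μ ∼ ν` with essentially bounded
Radon–Nikodym derivatives, and `∞` otherwise; valued in `ℝ≥0∞`. -/
noncomputable def hilbertDistMeas {E : Type*} [MeasurableSpace E] (μ ν : Measure E) : ℝ≥0∞ :=
  if μ ≪ ν ∧ ν ≪ μ ∧ essSup (μ.rnDeriv ν) ν ≠ ⊤ ∧ essSup (ν.rnDeriv μ) μ ≠ ⊤ then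
    ENNReal.ofReal
      (Real.log ((essSup (μ.rnDeriv ν) ν).toReal * (essSup (ν.rnDeriv μ) μ).toReal))
  else ⊤

private lemma essSup_rnDeriv_ge_one {E : Type*} [MeasurableSpace E] {μ ν : Measure E}
    [IsProbabilityMeasure μ] [IsProbabilityMeasure ν] (hμν : μ ≪ ν) :
    1 ≤ essSup (μ.rnDeriv ν) ν := by
  have h1 : ∫⁻ x, μ.rnDeriv ν x ∂ν = 1 := by
    rw [Measure.lintegral_rnDeriv hμν, measure_univ]
  have h2 : ∫⁻ x, μ.rnDeriv ν x ∂ν ≤ essSup (μ.rnDeriv ν) ν := by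
    calc ∫⁻ x, μ.rnDeriv ν x ∂ν
        ≤ ∫⁻ _, essSup (μ.rnDeriv ν) ν ∂ν := lintegral_mono_ae (ENNReal.ae_le_essSup _)
      _ = essSup (μ.rnDeriv ν) ν := by simp
  rw [← h1]; exact h2

private lemma hilbertDist_lt_imp {E : Type*} [MeasurableSpace E] {μ ν : Measure E}
    [IsProbabilityMeasure μ] [IsProbabilityMeasure ν] {δ : ℝ} (hδ : 0 < δ)
    (h : hilbertDistMeas μ ν < ENNReal.ofReal δ) :
    μ ≪ ν ∧ ν ≪ μ ∧ (∀ᵐ x ∂ν, μ.rnDeriv ν x ≤ ENNReal.ofReal (Real.exp δ))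
      ∧ (∀ᵐ x ∂μ, ν.rnDeriv μ x ≤ ENNReal.ofReal (Real.exp δ)) := by
  classical
  rw [hilbertDistMeas] at h
  split_ifs at h with hc
  · obtain ⟨hμν, hνμ, ha, hb⟩ := hc
    set a := essSup (μ.rnDeriv ν) ν with ha_def
    set b := essSup (ν.rnDeriv μ) μ with hb_def
    have ha1 : (1 : ℝ≥0∞) ≤ a := essSup_rnDeriv_ge_one hμν
    have hb1 : (1 : ℝ≥0∞) ≤ b := essSup_rnDeriv_ge_one hνμ
    have hat : 1 ≤ a.toReal := by
      rw [← ENNReal.toReal_one]; exact ENNReal.toReal_mono ha ha1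
    have hbt : 1 ≤ b.toReal := by
      rw [← ENNReal.toReal_one]; exact ENNReal.toReal_mono hb hb1
    have hlog : Real.log (a.toReal * b.toReal) < δ :=
      (ENNReal.ofReal_lt_ofReal_iff hδ).mp h
    have hab : a.toReal * b.toReal < Real.exp δ := by
      rwa [Real.log_lt_iff_lt_exp (by nlinarith)] at hlog
    have haR : a.toReal ≤ Real.exp δ :=
      le_of_lt (lt_of_le_of_lt (le_mul_of_one_le_right (by linarith) hbt) hab)
    have hbR : b.toReal ≤ Real.exp δ :=
      le_of_lt (lt_of_le_of_lt (le_mul_of_one_le_left (by linarith) hat) hab)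
    have haE : a ≤ ENNReal.ofReal (Real.exp δ) := by
      rw [← ENNReal.ofReal_toReal ha]; exact ENNReal.ofReal_le_ofReal haR
    have hbE : b ≤ ENNReal.ofReal (Real.exp δ) := by
      rw [← ENNReal.ofReal_toReal hb]; exact ENNReal.ofReal_le_ofReal hbR
    refine ⟨hμν, hνμ, ?_, ?_⟩
    · filter_upwards [ENNReal.ae_le_essSup (μ.rnDeriv ν)] with x hx using hx.trans haE
    · filter_upwards [ENNReal.ae_le_essSup (ν.rnDeriv μ)] with x hx using hx.trans hbE
  · exact absurd h (by simp)

private lemma hilbertDist_le_of_ae {E : Type*} [MeasurableSpace E] {μ ν : Measure E}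
    {δ : ℝ} (hδ : 0 ≤ δ) (hμν : μ ≪ ν) (hνμ : ν ≪ μ)
    (h1 : ∀ᵐ x ∂ν, μ.rnDeriv ν x ≤ ENNReal.ofReal (Real.exp δ))
    (h2 : ∀ᵐ x ∂μ, ν.rnDeriv μ x ≤ ENNReal.ofReal (Real.exp δ)) :
    hilbertDistMeas μ ν ≤ ENNReal.ofReal (2 * δ) := by
  classical
  have ha : essSup (μ.rnDeriv ν) ν ≤ ENNReal.ofReal (Real.exp δ) :=
    essSup_le_of_ae_le _ h1
  have hb : essSup (ν.rnDeriv μ) μ ≤ ENNReal.ofReal (Real.exp δ) :=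
    essSup_le_of_ae_le _ h2
  have ha' : essSup (μ.rnDeriv ν) ν ≠ ⊤ :=
    (lt_of_le_of_lt ha ENNReal.ofReal_lt_top).ne
  have hb' : essSup (ν.rnDeriv μ) μ ≠ ⊤ :=
    (lt_of_le_of_lt hb ENNReal.ofReal_lt_top).ne
  rw [hilbertDistMeas, if_pos ⟨hμν, hνμ, ha', hb'⟩]
  set A := (essSup (μ.rnDeriv ν) ν).toReal with hA
  set B := (essSup (ν.rnDeriv μ) μ).toReal with hB
  have hat : A ≤ Real.exp δ := by
    rw [hA, ← ENNReal.toReal_ofReal (Real.exp_pos δ).le]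
    exact ENNReal.toReal_mono (by simp) ha
  have hbt : B ≤ Real.exp δ := by
    rw [hB, ← ENNReal.toReal_ofReal (Real.exp_pos δ).le]
    exact ENNReal.toReal_mono (by simp) hb
  have hA0 : 0 ≤ A := ENNReal.toReal_nonneg
  have hB0 : 0 ≤ B := ENNReal.toReal_nonneg
  apply ENNReal.ofReal_le_ofReal
  have hprod : A * B ≤ Real.exp (2 * δ) := by
    rw [two_mul, Real.exp_add]
    exact mul_le_mul hat hbt hB0 (Real.exp_pos δ).le
  rcases eq_or_lt_of_le (mul_nonneg hA0 hB0) with h0 | h0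
  · rw [← h0, Real.log_zero]; linarith
  · exact (Real.log_le_iff_le_exp h0).mpr hprod

/-- The space of probability measures equipped with the Hilbert projective metric is a
complete (extended) metric space: every Cauchy sequence converges to a probability
measure in the Hilbert metric. -/
theorem stmt13 {E : Type*} [MeasurableSpace E] (μ : ℕ → Measure E)
    (hprob : ∀ n, IsProbabilityMeasure (μ n))
    (hcauchy : ∀ ε : ℝ, 0 < ε → ∃ N : ℕ, ∀ m ≥ N, ∀ n ≥ N,
      hilbertDistMeas (μ m) (μ n) < ENNReal.ofReal ε) :
    ∃ ν : Measure E, IsProbabilityMeasure ν ∧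
      ∀ ε : ℝ, 0 < ε → ∃ N : ℕ, ∀ n ≥ N, hilbertDistMeas (μ n) ν < ENNReal.ofReal ε := by
  classical
  haveI := hprob
  have key : ∀ k : ℕ, ∃ N : ℕ, ∀ m ≥ N, ∀ n ≥ N,
      hilbertDistMeas (μ m) (μ n) < ENNReal.ofReal (1 / (k + 1)) :=
    fun k => hcauchy _ (by positivity)
  choose N hN using key
  set N' : ℕ → ℕ := fun k => max (N k) (N 0) with hN'def
  have hN'0 : ∀ k, N 0 ≤ N' k := fun k => le_max_right _ _
  have hN'k : ∀ k, N k ≤ N' k := fun k => le_max_left _ _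
  set lam : Measure E := μ (N 0) with hlam
  set C : ℕ → ℝ≥0∞ := fun k => ENNReal.ofReal (Real.exp (1 / (k + 1))) with hC
  have hC0 : ∀ k, C k ≠ 0 := fun k => by
    simp [hC, ENNReal.ofReal_eq_zero, not_le, Real.exp_pos]
  have hCt : ∀ k, C k ≠ ⊤ := fun k => ENNReal.ofReal_ne_top
  -- key pairwise facts
  have main : ∀ k, ∀ m, N' k ≤ m → ∀ n, N' k ≤ n → (μ m) ≪ (μ n) ∧
      (∀ᵐ x ∂(μ n), (μ m).rnDeriv (μ n) x ≤ C k) := by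
    intro k m hm n hn
    obtain ⟨h1, h2, h3, h4⟩ := hilbertDist_lt_imp (δ := 1 / ((k : ℝ) + 1)) (by positivity)
      (hN k m ((hN'k k).trans hm) n ((hN'k k).trans hn))
    exact ⟨h1, h3⟩
  have hlam_ac : ∀ n, N 0 ≤ n → lam ≪ μ n ∧ μ n ≪ lam := by
    intro n hn
    obtain ⟨h1, h2, h3, h4⟩ := hilbertDist_lt_imp (δ := 1 / ((0 : ℕ) + 1))
      (by positivity) (hN 0 (N 0) le_rfl n hn)
    exact ⟨h1, h2⟩
  -- the a.e. comparison facts with respect to lam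
  have AE2 : ∀ᵐ x ∂lam, ∀ k m n, N' k ≤ m → N' k ≤ n →
      (μ m).rnDeriv lam x ≤ C k * (μ n).rnDeriv lam x := by
    rw [ae_all_iff]; intro k
    rw [ae_all_iff]; intro m
    rw [ae_all_iff]; intro n
    by_cases hm : N' k ≤ m
    · by_cases hn : N' k ≤ n
      · obtain ⟨hmn, hbd⟩ := main k m hm n hn
        have hlamn : lam ≪ μ n := (hlam_ac n ((hN'0 k).trans hn)).1
        have e1 : (μ m).rnDeriv (μ n) * (μ n).rnDeriv lam =ᵐ[lam] (μ m).rnDeriv lam :=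
          Measure.rnDeriv_mul_rnDeriv hmn
        have e2 : ∀ᵐ x ∂lam, (μ m).rnDeriv (μ n) x ≤ C k := hlamn.ae_le hbd
        filter_upwards [e1, e2] with x hx1 hx2 _ _
        calc (μ m).rnDeriv lam x = (μ m).rnDeriv (μ n) x * (μ n).rnDeriv lam x := hx1.symm
          _ ≤ C k * (μ n).rnDeriv lam x := mul_le_mul_left hx2 _
      · filter_upwards with x _ hn'; exact absurd hn' hn
    · filter_upwards with x hm'; exact absurd hm' hm
  have AE1 : (μ (N 0)).rnDeriv lam =ᵐ[lam] 1 := Measure.rnDeriv_self lam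
  -- the candidate density
  set g : E → ℝ≥0∞ := fun x => limsup (fun n => (μ n).rnDeriv lam x) atTop with hg
  have hg_meas : Measurable g := Measurable.limsup fun n => Measure.measurable_rnDeriv _ _
  have hN'0eq : N' 0 = N 0 := by simp [hN'def]
  -- main pointwise consequences
  have AEmain : ∀ᵐ x ∂lam,
      ((C 0)⁻¹ ≤ g x ∧ g x ≤ C 0) ∧
      (∀ k n, N' k ≤ n → g x ≤ C k * (μ n).rnDeriv lam x ∧
        (μ n).rnDeriv lam x ≤ C k * g x) ∧
      (∀ n, N 0 ≤ n → (C 0)⁻¹ ≤ (μ n).rnDeriv lam x ∧ (μ n).rnDeriv lam x ≤ C 0) := by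
    filter_upwards [AE2, AE1] with x h2 h1
    have hbound : ∀ n, N 0 ≤ n →
        (C 0)⁻¹ ≤ (μ n).rnDeriv lam x ∧ (μ n).rnDeriv lam x ≤ C 0 := by
      intro n hn
      constructor
      · have := h2 0 (N 0) n (hN'0eq ▸ le_rfl) (hN'0eq ▸ hn)
        rw [h1] at this
        simp only [Pi.one_apply] at this
        rw [ENNReal.inv_le_iff_le_mul (fun _ => hC0 0) (fun h => absurd h (hCt 0))]
        exact this
      · have := h2 0 n (N 0) (hN'0eq ▸ hn) (hN'0eq ▸ le_rfl)
        rw [h1] at this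
        simpa using this
    have hup : ∀ k n, N' k ≤ n → g x ≤ C k * (μ n).rnDeriv lam x := by
      intro k n hn
      apply limsup_le_of_le (by isBoundedDefault)
      filter_upwards [eventually_ge_atTop (N' k)] with m hm
      exact h2 k m n hm hn
    have hdown : ∀ k n, N' k ≤ n → (μ n).rnDeriv lam x ≤ C k * g x := by
      intro k n hn
      have hfreq : ∀ᶠ m in atTop, (μ n).rnDeriv lam x / C k ≤ (μ m).rnDeriv lam x := by
        filter_upwards [eventually_ge_atTop (N' k)] with m hm
        rw [ENNReal.div_le_iff_le_mul (Or.inl (hC0 k)) (Or.inl (hCt k))]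
        calc (μ n).rnDeriv lam x ≤ C k * (μ m).rnDeriv lam x := h2 k n m hn hm
          _ = (μ m).rnDeriv lam x * C k := by rw [mul_comm]
      have : (μ n).rnDeriv lam x / C k ≤ g x :=
        le_limsup_of_frequently_le' hfreq.frequently
      rwa [ENNReal.div_le_iff_le_mul (Or.inl (hC0 k)) (Or.inl (hCt k)), mul_comm] at this
    refine ⟨⟨?_, ?_⟩, fun k n hn => ⟨hup k n hn, hdown k n hn⟩, hbound⟩
    · have h := hdown 0 (N 0) (hN'0eq ▸ le_rfl)
      rw [h1] at h
      simp only [Pi.one_apply] at h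
      rw [ENNReal.inv_le_iff_le_mul (fun _ => hC0 0) (fun h' => absurd h' (hCt 0))]
      exact h
    · have h := hup 0 (N 0) (hN'0eq ▸ le_rfl)
      rw [h1] at h
      simpa using h
  -- integral of g equals 1
  have hint_n : ∀ n, N 0 ≤ n → ∫⁻ x, (μ n).rnDeriv lam x ∂lam = 1 := by
    intro n hn
    rw [Measure.lintegral_rnDeriv (hlam_ac n hn).2, measure_univ]
  have hCtend : Tendsto C atTop (nhds 1) := by
    have h0 : Tendsto (fun k : ℕ => 1 / ((k : ℝ) + 1)) atTop (nhds 0) :=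
      tendsto_one_div_add_atTop_nhds_zero_nat
    have h1 : Tendsto (fun k : ℕ => Real.exp (1 / ((k : ℝ) + 1))) atTop (nhds 1) := by
      have := (Real.continuous_exp.tendsto 0).comp h0
      simpa [Function.comp_def] using this
    have h2 : Tendsto (fun k : ℕ => ENNReal.ofReal (Real.exp (1 / ((k : ℝ) + 1)))) atTop
        (nhds (ENNReal.ofReal 1)) := (ENNReal.continuous_ofReal.tendsto 1).comp h1
    rw [ENNReal.ofReal_one] at h2
    exact h2
  have hint_le : ∀ k, ∫⁻ x, g x ∂lam ≤ C k := by
    intro k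
    have hb : ∀ᵐ x ∂lam, g x ≤ C k * (μ (N' k)).rnDeriv lam x := by
      filter_upwards [AEmain] with x hx using (hx.2.1 k (N' k) le_rfl).1
    calc ∫⁻ x, g x ∂lam ≤ ∫⁻ x, C k * (μ (N' k)).rnDeriv lam x ∂lam :=
          lintegral_mono_ae hb
      _ = C k * ∫⁻ x, (μ (N' k)).rnDeriv lam x ∂lam :=
          lintegral_const_mul _ (Measure.measurable_rnDeriv _ _)
      _ = C k := by rw [hint_n (N' k) (hN'0 k), mul_one]
  have hint_ge : ∀ k, (C k)⁻¹ ≤ ∫⁻ x, g x ∂lam := by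
    intro k
    have hb : ∀ᵐ x ∂lam, (μ (N' k)).rnDeriv lam x ≤ C k * g x := by
      filter_upwards [AEmain] with x hx using (hx.2.1 k (N' k) le_rfl).2
    have h1 : (1 : ℝ≥0∞) ≤ C k * ∫⁻ x, g x ∂lam := by
      calc (1 : ℝ≥0∞) = ∫⁻ x, (μ (N' k)).rnDeriv lam x ∂lam :=
            (hint_n (N' k) (hN'0 k)).symm
        _ ≤ ∫⁻ x, C k * g x ∂lam := lintegral_mono_ae hb
        _ = C k * ∫⁻ x, g x ∂lam := lintegral_const_mul _ hg_meas
    rw [ENNReal.inv_le_iff_le_mul (fun _ => hC0 k) (fun h => absurd h (hCt k))]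
    exact h1
  have hint : ∫⁻ x, g x ∂lam = 1 := by
    apply le_antisymm
    · exact ge_of_tendsto' hCtend hint_le
    · have hinv : Tendsto (fun k => (C k)⁻¹) atTop (nhds 1) := by
        have := hCtend.inv
        simpa using this
      exact le_of_tendsto' hinv hint_ge
  -- the limit measure
  refine ⟨lam.withDensity g, ?_, ?_⟩
  · constructor
    rw [withDensity_apply _ MeasurableSet.univ, setLIntegral_univ, hint]
  set ν : Measure E := lam.withDensity g with hν
  haveI : IsProbabilityMeasure ν := by
    constructor
    rw [hν, withDensity_apply _ MeasurableSet.univ, setLIntegral_univ, hint]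
  have hνlam : ν ≪ lam := withDensity_absolutelyContinuous _ _
  have hlamν : lam ≪ ν := by
    apply withDensity_absolutelyContinuous' hg_meas.aemeasurable
    filter_upwards [AEmain] with x hx
    exact fun h0 => (hCt 0) (by simpa [h0] using hx.1.1)
  have hgr : ν.rnDeriv lam =ᵐ[lam] g := Measure.rnDeriv_withDensity lam hg_meas
  intro ε hε
  obtain ⟨k, hk⟩ := exists_nat_one_div_lt (show (0:ℝ) < ε / 3 by linarith)
  refine ⟨N' k, fun n hn => ?_⟩
  have hn0 : N 0 ≤ n := (hN'0 k).trans hn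
  have hμν : μ n ≪ ν := (hlam_ac n hn0).2.trans hlamν
  have hνμ : ν ≪ μ n := hνlam.trans (hlam_ac n hn0).1
  -- bound on rnDeriv (μ n) ν
  have b1 : ∀ᵐ x ∂ν, (μ n).rnDeriv ν x ≤ C k := by
    apply hνlam.ae_le
    have e1 : (μ n).rnDeriv ν * ν.rnDeriv lam =ᵐ[lam] (μ n).rnDeriv lam :=
      Measure.rnDeriv_mul_rnDeriv hμν
    filter_upwards [e1, hgr, AEmain] with x hx1 hx2 hx3
    have hgx0 : g x ≠ 0 := fun h0 => (hCt 0) (by simpa [h0] using hx3.1.1)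
    have hgxt : g x ≠ ⊤ := (lt_of_le_of_lt hx3.1.2 (lt_of_le_of_ne le_top (hCt 0))).ne
    have key : (μ n).rnDeriv ν x * g x ≤ C k * g x := by
      calc (μ n).rnDeriv ν x * g x = (μ n).rnDeriv ν x * ν.rnDeriv lam x := by rw [hx2]
        _ = (μ n).rnDeriv lam x := hx1
        _ ≤ C k * g x := (hx3.2.1 k n hn).2
    rwa [mul_comm ((μ n).rnDeriv ν x) (g x), mul_comm (C k) (g x),
      ENNReal.mul_le_mul_iff_right hgx0 hgxt] at key
  -- bound on rnDeriv ν (μ n)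
  have b2 : ∀ᵐ x ∂(μ n), ν.rnDeriv (μ n) x ≤ C k := by
    apply (hlam_ac n hn0).2.ae_le
    have e1 : ν.rnDeriv (μ n) * (μ n).rnDeriv lam =ᵐ[lam] ν.rnDeriv lam :=
      Measure.rnDeriv_mul_rnDeriv hνμ
    filter_upwards [e1, hgr, AEmain] with x hx1 hx2 hx3
    have hb := hx3.2.2 n hn0
    have hh0 : (μ n).rnDeriv lam x ≠ 0 := fun h0 => (hCt 0) (by simpa [h0] using hb.1)
    have hht : (μ n).rnDeriv lam x ≠ ⊤ :=
      (lt_of_le_of_lt hb.2 (lt_of_le_of_ne le_top (hCt 0))).ne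
    have key : ν.rnDeriv (μ n) x * (μ n).rnDeriv lam x ≤ C k * (μ n).rnDeriv lam x := by
      calc ν.rnDeriv (μ n) x * (μ n).rnDeriv lam x = ν.rnDeriv lam x := hx1
        _ = g x := hx2
        _ ≤ C k * (μ n).rnDeriv lam x := (hx3.2.1 k n hn).1
    rwa [mul_comm (ν.rnDeriv (μ n) x) _, mul_comm (C k) _,
      ENNReal.mul_le_mul_iff_right hh0 hht] at key
  -- conclude
  have hfin := hilbertDist_le_of_ae (δ := 1 / ((k : ℝ) + 1)) (by positivity) hμν hνμ b1 b2
  apply lt_of_le_of_lt hfin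
  apply (ENNReal.ofReal_lt_ofReal_iff hε).mpr
  have hk' : 1 / ((k : ℝ) + 1) < ε / 3 := hk
  linarith
end

section
/- If (μ_n) is a sequence of probability measures converging to μ in the Hilbert metric, then for every f-divergence D_f (f convex, f(1)=0, f finite on (0,∞)), both D_f(μ_n ‖ μ) → 0 and D_f(μ ‖ μ_n) → 0. -/
open MeasureTheory Filter
open scoped ENNReal Topology

lemma one_le_essSup_rnDeriv {E : Type*} [MeasurableSpace E] (μ ν : Measure E)
    [IsProbabilityMeasure μ] [IsProbabilityMeasure ν] (hμν : μ ≪ ν) :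
    1 ≤ essSup (μ.rnDeriv ν) ν := by
  by_contra h
  push_neg at h
  have h1 : ∫⁻ x, μ.rnDeriv ν x ∂ν = 1 := by
    rw [Measure.lintegral_rnDeriv hμν]; simp
  have h2 : ∫⁻ x, μ.rnDeriv ν x ∂ν ≤ essSup (μ.rnDeriv ν) ν := by
    calc ∫⁻ x, μ.rnDeriv ν x ∂ν ≤ ∫⁻ _, essSup (μ.rnDeriv ν) ν ∂ν :=
          lintegral_mono_ae (ENNReal.ae_le_essSup _)
      _ = essSup (μ.rnDeriv ν) ν := by simp
  exact absurd (h1 ▸ h2) (not_le.2 h)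

lemma density_bounds {E : Type*} [MeasurableSpace E] (μ ν : Measure E)
    [IsProbabilityMeasure μ] [IsProbabilityMeasure ν] (hμν : μ ≪ ν) (hνμ : ν ≪ μ)
    (hA : essSup (μ.rnDeriv ν) ν ≠ ⊤) (hB : essSup (ν.rnDeriv μ) μ ≠ ⊤)
    {δ : ℝ} (hδ0 : 0 < δ) (hδ1 : δ < 1)
    (hAlt : (essSup (μ.rnDeriv ν) ν).toReal < 1 + δ)
    (hBlt : (essSup (ν.rnDeriv μ) μ).toReal < 1 + δ) :
    ∀ᵐ x ∂ν, (μ.rnDeriv ν x).toReal ∈ Set.Icc (1 - δ) (1 + δ) := by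
  set A := essSup (μ.rnDeriv ν) ν with hAdef
  set B := essSup (ν.rnDeriv μ) μ with hBdef
  have h1B : 1 ≤ B := one_le_essSup_rnDeriv ν μ hνμ
  have h1Bt : 1 ≤ B.toReal := by simpa using ENNReal.toReal_mono hB h1B
  have hup : ∀ᵐ x ∂ν, μ.rnDeriv ν x ≤ A := ENNReal.ae_le_essSup _
  have hinv : (μ.rnDeriv ν)⁻¹ =ᵐ[ν] ν.rnDeriv μ :=
    (Measure.inv_rnDeriv hμν).filter_mono hνμ.ae_le
  have hlow : ∀ᵐ x ∂ν, ν.rnDeriv μ x ≤ B :=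
    (ENNReal.ae_le_essSup _).filter_mono hνμ.ae_le
  filter_upwards [hup, hinv, hlow] with x hx1 hx2 hx3
  have hxne : μ.rnDeriv ν x ≠ ⊤ := (lt_of_le_of_lt hx1 (lt_top_iff_ne_top.2 hA)).ne
  have hxinv : (μ.rnDeriv ν x)⁻¹ ≤ B := by
    rw [show (μ.rnDeriv ν x)⁻¹ = ((μ.rnDeriv ν)⁻¹) x from rfl, hx2]; exact hx3
  have hxlow : B⁻¹ ≤ μ.rnDeriv ν x := by
    have := ENNReal.inv_le_inv.mpr hxinv
    rwa [inv_inv] at this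
  constructor
  · have h1 : (B⁻¹).toReal ≤ (μ.rnDeriv ν x).toReal := ENNReal.toReal_mono hxne hxlow
    have h2 : (B⁻¹).toReal = B.toReal⁻¹ := ENNReal.toReal_inv B
    have hBpos : 0 < B.toReal := by linarith
    have h3 : 1 - δ ≤ B.toReal⁻¹ := by
      rw [inv_eq_one_div, le_div_iff₀ hBpos]; nlinarith
    linarith [h1, h2 ▸ h1]
  · have h1 : (μ.rnDeriv ν x).toReal ≤ A.toReal := ENNReal.toReal_mono hA hx1
    linarith

lemma eventually_density_bounds {E : Type*} [MeasurableSpace E] (μseq : ℕ → Measure E)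
    (μ : Measure E) (hprob : ∀ n, IsProbabilityMeasure (μseq n)) [IsProbabilityMeasure μ]
    (hconv : Tendsto (fun n => hilbertDistMeas (μseq n) μ) atTop (𝓝 0))
    {δ : ℝ} (hδ0 : 0 < δ) (hδ1 : δ < 1) :
    ∀ᶠ n in atTop,
      (∀ᵐ x ∂μ, (((μseq n).rnDeriv μ) x).toReal ∈ Set.Icc (1 - δ) (1 + δ)) ∧
      (∀ᵐ x ∂(μseq n), ((μ.rnDeriv (μseq n)) x).toReal ∈ Set.Icc (1 - δ) (1 + δ)) := by
  have hcpos : (0 : ℝ≥0∞) < ENNReal.ofReal (Real.log (1 + δ)) := by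
    rw [ENNReal.ofReal_pos]
    exact Real.log_pos (by linarith)
  filter_upwards [hconv.eventually (gt_mem_nhds hcpos)] with n hn
  haveI := hprob n
  by_cases hcond : (μseq n) ≪ μ ∧ μ ≪ (μseq n) ∧
      essSup ((μseq n).rnDeriv μ) μ ≠ ⊤ ∧ essSup (μ.rnDeriv (μseq n)) (μseq n) ≠ ⊤
  · obtain ⟨h1, h2, hA, hB⟩ := hcond
    rw [hilbertDistMeas, if_pos ⟨h1, h2, hA, hB⟩] at hn
    set A := essSup ((μseq n).rnDeriv μ) μ with hAdef
    set B := essSup (μ.rnDeriv (μseq n)) (μseq n) with hBdef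
    have h1At : 1 ≤ A.toReal := by
      simpa using ENNReal.toReal_mono hA (one_le_essSup_rnDeriv _ _ h1)
    have h1Bt : 1 ≤ B.toReal := by
      simpa using ENNReal.toReal_mono hB (one_le_essSup_rnDeriv _ _ h2)
    have hlog : Real.log (A.toReal * B.toReal) < Real.log (1 + δ) :=
      (ENNReal.ofReal_lt_ofReal_iff (Real.log_pos (by linarith))).1 hn
    have hprod : A.toReal * B.toReal < 1 + δ := by
      have := (Real.log_lt_log_iff (by nlinarith) (by linarith)).1 hlog
      exact this
    have hAlt : A.toReal < 1 + δ := lt_of_le_of_lt (le_mul_of_one_le_right (by linarith) h1Bt) hprod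
    have hBlt : B.toReal < 1 + δ := lt_of_le_of_lt (le_mul_of_one_le_left (by linarith) h1At) hprod
    exact ⟨density_bounds (μseq n) μ h1 h2 hA hB hδ0 hδ1 hAlt hBlt,
      density_bounds μ (μseq n) h2 h1 hB hA hδ0 hδ1 hBlt hAlt⟩
  · exfalso
    rw [hilbertDistMeas, if_neg hcond] at hn
    exact absurd hn (by simp)

lemma integral_abs_le {E : Type*} [MeasurableSpace E] (ν : Measure E) [IsProbabilityMeasure ν]
    (h : ℝ → ℝ) (g : E → ℝ) {ε : ℝ} (hε : 0 < ε) (hb : ∀ᵐ x ∂ν, |h (g x)| ≤ ε) :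
    |∫ x, h (g x) ∂ν| ≤ ε := by
  by_cases hi : Integrable (fun x => h (g x)) ν
  · calc |∫ x, h (g x) ∂ν| ≤ ∫ x, ‖h (g x)‖ ∂ν := by
          simpa [Real.norm_eq_abs] using norm_integral_le_integral_norm (fun x => h (g x))
      _ ≤ ∫ _, ε ∂ν := integral_mono_ae hi.norm (integrable_const _)
          (by filter_upwards [hb] with x hx; simpa [Real.norm_eq_abs] using hx)
      _ = ε := by simp
  · rw [integral_undef hi]; simpa using hε.le

/-- If a sequence of probability measures `μ_n` converges to `μ` in the Hilbert metric,
then for every `f`-divergence `D_f` (with `f` convex on `ℝ₊` and `f(1) = 0`), both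
`D_f(μ_n ‖ μ) → 0` and `D_f(μ ‖ μ_n) → 0`. -/
theorem stmt15 {E : Type*} [MeasurableSpace E] (μseq : ℕ → Measure E) (μ : Measure E)
    (hprob : ∀ n, IsProbabilityMeasure (μseq n)) [IsProbabilityMeasure μ]
    (hconv : Tendsto (fun n => hilbertDistMeas (μseq n) μ) atTop (𝓝 0))
    (f : ℝ → ℝ) (hf : ConvexOn ℝ (Set.Ici 0) f) (hf1 : f 1 = 0) :
    Tendsto (fun n => ∫ x, f (((μseq n).rnDeriv μ x).toReal) ∂μ) atTop (𝓝 0) ∧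
      Tendsto (fun n => ∫ x, f ((μ.rnDeriv (μseq n) x).toReal) ∂(μseq n)) atTop (𝓝 0) := by
  have h1mem : (1 : ℝ) ∈ interior (Set.Ici (0 : ℝ)) := by
    rw [interior_Ici]; exact Set.mem_Ioi.2 one_pos
  have hc1 : ContinuousAt f 1 :=
    hf.continuousOn_interior.continuousAt (isOpen_interior.mem_nhds h1mem)
  -- for every ε > 0 find δ with bound on f over Icc (1-δ) (1+δ)
  have hkey : ∀ ε : ℝ, 0 < ε → ∃ δ : ℝ, 0 < δ ∧ δ < 1 ∧
      ∀ x ∈ Set.Icc (1 - δ) (1 + δ), |f x| ≤ ε / 2 := by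
    intro ε hε
    obtain ⟨δ', hδ'pos, hδ'⟩ := Metric.continuousAt_iff.1 hc1 (ε / 2) (by linarith)
    refine ⟨min (δ' / 2) (1 / 2), by positivity, lt_of_le_of_lt (min_le_right _ _) (by norm_num),
      fun x hx => ?_⟩
    have hdist : dist x 1 < δ' := by
      rw [Real.dist_eq]
      have h1 := hx.1; have h2 := hx.2
      have hm : min (δ' / 2) (1 / 2) ≤ δ' / 2 := min_le_left _ _
      rw [abs_lt]; constructor <;> linarith
    have := hδ' hdist
    rw [Real.dist_eq, hf1, sub_zero] at this
    linarith
  constructor <;>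
  · rw [NormedAddCommGroup.tendsto_nhds_zero]
    intro ε hε
    obtain ⟨δ, hδ0, hδ1, hδ⟩ := hkey ε hε
    filter_upwards [eventually_density_bounds μseq μ hprob hconv hδ0 hδ1] with n hn
    haveI := hprob n
    rw [Real.norm_eq_abs]
    refine lt_of_le_of_lt (integral_abs_le _ f _ (show (0:ℝ) < ε / 2 by linarith) ?_)
      (by linarith)
    first
    | (filter_upwards [hn.1] with x hx; exact hδ _ hx)
    | (filter_upwards [hn.2] with x hx; exact hδ _ hx)
end

section
/- For a strictly positive n×n matrix A, the exponential of the projective diameter Δ(A) = sup over x, y in ℝ₊ⁿ \ {0} of H(Ax, Ay) equals max over indices i,j,k,l of (A_{ik} A_{jl})/(A_{jk} A_{il}); hence Birkhoff's contraction coefficient is τ(A) = tanh(Δ(A)/4) = (1 − √φ(A))/(1 + √φ(A)) with φ(A) = min_{i,j,k,l} A_{ik}A_{jl}/(A_{jk}A_{il}). -/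
open scoped BigOperators
set_option linter.unusedSectionVars false
set_option maxHeartbeats 800000

section aux
variable {n : ℕ} [NeZero n]

private lemma fin_sup_att (f : Fin n → ℝ) : ∃ i, (⨆ j, f j) = f i ∧ ∀ j, f j ≤ f i := by
  obtain ⟨i, hi⟩ := Finite.exists_max f
  exact ⟨i, le_antisymm (ciSup_le hi) (le_ciSup (Finite.bddAbove_range f) i), hi⟩

private lemma fin_inf_att (f : Fin n → ℝ) : ∃ i, (⨅ j, f j) = f i ∧ ∀ j, f i ≤ f j := by
  obtain ⟨i, hi⟩ := Finite.exists_min f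
  exact ⟨i, le_antisymm (ciInf_le (Finite.bddBelow_range f) i) (le_ciInf hi), hi⟩

private lemma fin_sup4 (f : Fin n → Fin n → Fin n → Fin n → ℝ) :
    ∃ i j k l, (⨆ i, ⨆ j, ⨆ k, ⨆ l, f i j k l) = f i j k l ∧
      ∀ i' j' k' l', f i' j' k' l' ≤ f i j k l := by
  obtain ⟨i, hi, _⟩ := fin_sup_att (fun i => ⨆ j, ⨆ k, ⨆ l, f i j k l)
  obtain ⟨j, hj, _⟩ := fin_sup_att (fun j => ⨆ k, ⨆ l, f i j k l)
  obtain ⟨k, hk, _⟩ := fin_sup_att (fun k => ⨆ l, f i j k l)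
  obtain ⟨l, hl, _⟩ := fin_sup_att (fun l => f i j k l)
  refine ⟨i, j, k, l, by rw [hi]; rw [hj]; rw [hk]; rw [hl], fun i' j' k' l' => ?_⟩
  calc f i' j' k' l' ≤ ⨆ l'', f i' j' k' l'' :=
        le_ciSup (f := fun l'' => f i' j' k' l'') (Finite.bddAbove_range _) l'
    _ ≤ ⨆ k'', ⨆ l'', f i' j' k'' l'' :=
        le_ciSup (f := fun k'' => ⨆ l'', f i' j' k'' l'') (Finite.bddAbove_range _) k'
    _ ≤ ⨆ j'', ⨆ k'', ⨆ l'', f i' j'' k'' l'' :=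
        le_ciSup (f := fun j'' => ⨆ k'', ⨆ l'', f i' j'' k'' l'') (Finite.bddAbove_range _) j'
    _ ≤ ⨆ i'', ⨆ j'', ⨆ k'', ⨆ l'', f i'' j'' k'' l'' :=
        le_ciSup (f := fun i'' => ⨆ j'', ⨆ k'', ⨆ l'', f i'' j'' k'' l'') (Finite.bddAbove_range _) i'
    _ = f i j k l := by rw [hi]; rw [hj]; rw [hk]; rw [hl]

private lemma fin_inf4 (f : Fin n → Fin n → Fin n → Fin n → ℝ) :
    ∃ i j k l, (⨅ i, ⨅ j, ⨅ k, ⨅ l, f i j k l) = f i j k l ∧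
      ∀ i' j' k' l', f i j k l ≤ f i' j' k' l' := by
  obtain ⟨i, hi, _⟩ := fin_inf_att (fun i => ⨅ j, ⨅ k, ⨅ l, f i j k l)
  obtain ⟨j, hj, _⟩ := fin_inf_att (fun j => ⨅ k, ⨅ l, f i j k l)
  obtain ⟨k, hk, _⟩ := fin_inf_att (fun k => ⨅ l, f i j k l)
  obtain ⟨l, hl, _⟩ := fin_inf_att (fun l => f i j k l)
  refine ⟨i, j, k, l, by rw [hi]; rw [hj]; rw [hk]; rw [hl], fun i' j' k' l' => ?_⟩
  calc f i j k l = ⨅ i'', ⨅ j'', ⨅ k'', ⨅ l'', f i'' j'' k'' l'' := by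
        rw [hi]; rw [hj]; rw [hk]; rw [hl]
    _ ≤ ⨅ j'', ⨅ k'', ⨅ l'', f i' j'' k'' l'' :=
        ciInf_le (f := fun i'' => ⨅ j'', ⨅ k'', ⨅ l'', f i'' j'' k'' l'') (Finite.bddBelow_range _) i'
    _ ≤ ⨅ k'', ⨅ l'', f i' j' k'' l'' :=
        ciInf_le (f := fun j'' => ⨅ k'', ⨅ l'', f i' j'' k'' l'') (Finite.bddBelow_range _) j'
    _ ≤ ⨅ l'', f i' j' k' l'' :=
        ciInf_le (f := fun k'' => ⨅ l'', f i' j' k'' l'') (Finite.bddBelow_range _) k'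
    _ ≤ f i' j' k' l' :=
        ciInf_le (f := fun l'' => f i' j' k' l'') (Finite.bddBelow_range _) l'

private lemma mulVec_pos (A : Matrix (Fin n) (Fin n) ℝ) (hA : ∀ i j, 0 < A i j)
    {x : Fin n → ℝ} (hx : ∀ i, 0 ≤ x i) (hx0 : x ≠ 0) (i : Fin n) :
    0 < A.mulVec x i := by
  obtain ⟨k, hk⟩ := Function.ne_iff.mp hx0
  have hk' : 0 < x k := lt_of_le_of_ne (hx k) (Ne.symm hk)
  simp only [Matrix.mulVec, dotProduct]
  exact Finset.sum_pos' (fun j _ => mul_nonneg (hA i j).le (hx j))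
    ⟨k, Finset.mem_univ k, mul_pos (hA i k) hk'⟩

private lemma ratio_le (A : Matrix (Fin n) (Fin n) ℝ) (hA : ∀ i j, 0 < A i j)
    {x : Fin n → ℝ} (hx : ∀ i, 0 ≤ x i) (hx0 : x ≠ 0) (i j : Fin n) :
    A.mulVec x i / A.mulVec x j ≤ ⨆ k, A i k / A j k := by
  obtain ⟨k0, hk0, hmax⟩ := fin_sup_att (fun k => A i k / A j k)
  rw [hk0, div_le_div_iff₀ (mulVec_pos A hA hx hx0 j) (hA j k0)]
  simp only [Matrix.mulVec, dotProduct]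
  rw [Finset.sum_mul, Finset.mul_sum]
  apply Finset.sum_le_sum
  intro k _
  have h := hmax k
  rw [div_le_div_iff₀ (hA j k) (hA j k0)] at h
  calc A i k * x k * A j k0 = (A i k * A j k0) * x k := by ring
    _ ≤ (A i k0 * A j k) * x k := mul_le_mul_of_nonneg_right h (hx k)
    _ = A i k0 * (A j k * x k) := by ring
end aux

/-- For a strictly positive `n×n` matrix `A`, the exponential of the projective diameter
`Δ(A) = sup_{x,y ∈ ℝ₊ⁿ\{0}} H(Ax, Ay)` equals `max_{i,j,k,l} (A_{ik} A_{jl})/(A_{jk} A_{il})`,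
and Birkhoff's contraction coefficient is
`τ(A) = tanh(Δ(A)/4) = (1 − √φ(A))/(1 + √φ(A))` with
`φ(A) = min_{i,j,k,l} (A_{ik} A_{jl})/(A_{jk} A_{il})`.
Here `H(u,v) = log((max_i u_i/v_i) · (max_j v_j/u_j))` is the Hilbert projective metric. -/
theorem stmt17 {n : ℕ} [NeZero n] (A : Matrix (Fin n) (Fin n) ℝ)
    (hA : ∀ i j, 0 < A i j)
    (Δ φ : ℝ)
    (hΔ : Δ = sSup {d : ℝ | ∃ x y : Fin n → ℝ,
      (∀ i, 0 ≤ x i) ∧ x ≠ 0 ∧ (∀ i, 0 ≤ y i) ∧ y ≠ 0 ∧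
      d = Real.log ((⨆ i, A.mulVec x i / A.mulVec y i) * ⨆ j, A.mulVec y j / A.mulVec x j)})
    (hφ : φ = ⨅ i, ⨅ j, ⨅ k, ⨅ l, A i k * A j l / (A j k * A i l)) :
    Real.exp Δ = (⨆ i, ⨆ j, ⨆ k, ⨆ l, A i k * A j l / (A j k * A i l)) ∧
      Real.tanh (Δ / 4) = (1 - Real.sqrt φ) / (1 + Real.sqrt φ) := by
  set S := {d : ℝ | ∃ x y : Fin n → ℝ,
      (∀ i, 0 ≤ x i) ∧ x ≠ 0 ∧ (∀ i, 0 ≤ y i) ∧ y ≠ 0 ∧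
      d = Real.log ((⨆ i, A.mulVec x i / A.mulVec y i) * ⨆ j, A.mulVec y j / A.mulVec x j)}
    with hS
  obtain ⟨i0, j0, k0, l0, hR, hRmax⟩ :=
    fin_sup4 (fun i j k l => A i k * A j l / (A j k * A i l))
  set R := ⨆ i, ⨆ j, ⨆ k, ⨆ l, A i k * A j l / (A j k * A i l) with hRdef
  have hrpos : ∀ i j k l : Fin n, 0 < A i k * A j l / (A j k * A i l) := fun i j k l =>
    div_pos (mul_pos (hA i k) (hA j l)) (mul_pos (hA j k) (hA i l))
  have hRpos : 0 < R := by rw [hR]; exact hrpos i0 j0 k0 l0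
  -- upper bound
  have hub : ∀ d ∈ S, d ≤ Real.log R := by
    intro d hd
    obtain ⟨x, y, hx, hx0, hy, hy0, hdEq⟩ := hd
    have axp := mulVec_pos A hA hx hx0
    have ayp := mulVec_pos A hA hy hy0
    obtain ⟨iP, hiP, _⟩ := fin_sup_att (fun i => A.mulVec x i / A.mulVec y i)
    obtain ⟨jQ, hjQ, _⟩ := fin_sup_att (fun j => A.mulVec y j / A.mulVec x j)
    have h1 := ratio_le A hA hx hx0 iP jQ
    have h2 := ratio_le A hA hy hy0 jQ iP
    obtain ⟨kM, hkM, _⟩ := fin_sup_att (fun k => A iP k / A jQ k)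
    obtain ⟨lM, hlM, _⟩ := fin_sup_att (fun l => A jQ l / A iP l)
    have key : (⨆ i, A.mulVec x i / A.mulVec y i) * (⨆ j, A.mulVec y j / A.mulVec x j) ≤ R := by
      rw [hiP, hjQ]
      have e1 : A.mulVec x iP / A.mulVec y iP * (A.mulVec y jQ / A.mulVec x jQ)
          = (A.mulVec x iP / A.mulVec x jQ) * (A.mulVec y jQ / A.mulVec y iP) := by
        rw [div_mul_div_comm, div_mul_div_comm,
          mul_comm (A.mulVec y iP) (A.mulVec x jQ)]
      rw [e1]
      calc (A.mulVec x iP / A.mulVec x jQ) * (A.mulVec y jQ / A.mulVec y iP)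
          ≤ (⨆ k, A iP k / A jQ k) * ⨆ l, A jQ l / A iP l :=
            mul_le_mul h1 h2 (div_nonneg (ayp jQ).le (ayp iP).le)
              (le_trans (div_pos (axp iP) (axp jQ)).le h1)
        _ = (A iP kM / A jQ kM) * (A jQ lM / A iP lM) := by rw [hkM, hlM]
        _ = A iP kM * A jQ lM / (A jQ kM * A iP lM) := div_mul_div_comm _ _ _ _
        _ ≤ R := by rw [hR]; exact hRmax iP jQ kM lM
    have hprodpos : 0 < (⨆ i, A.mulVec x i / A.mulVec y i) * ⨆ j, A.mulVec y j / A.mulVec x j := by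
      rw [hiP, hjQ]
      exact mul_pos (div_pos (axp iP) (ayp iP)) (div_pos (ayp jQ) (axp jQ))
    rw [hdEq]
    exact Real.log_le_log hprodpos key
  -- membership
  have hmem : Real.log R ∈ S := by
    refine ⟨Pi.single k0 1, Pi.single l0 1, ?_, ?_, ?_, ?_, ?_⟩
    · intro i; rw [Pi.single_apply]; split <;> norm_num
    · intro h; have := congrFun h k0; simp at this
    · intro i; rw [Pi.single_apply]; split <;> norm_num
    · intro h; have := congrFun h l0; simp at this
    · simp only [Matrix.mulVec_single_one, Matrix.col_apply, mul_one]
      congr 1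
      obtain ⟨iM, hiM, _⟩ := fin_sup_att (fun i => A i k0 / A i l0)
      obtain ⟨jM, hjM, _⟩ := fin_sup_att (fun j => A j l0 / A j k0)
      apply le_antisymm
      · rw [hR]
        calc A i0 k0 * A j0 l0 / (A j0 k0 * A i0 l0)
            = (A i0 k0 / A i0 l0) * (A j0 l0 / A j0 k0) := by
              rw [div_mul_div_comm, mul_comm (A i0 l0) (A j0 k0)]
          _ ≤ (⨆ i, A i k0 / A i l0) * ⨆ j, A j l0 / A j k0 :=
              mul_le_mul
                (le_ciSup (f := fun i => A i k0 / A i l0) (Finite.bddAbove_range _) i0)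
                (le_ciSup (f := fun j => A j l0 / A j k0) (Finite.bddAbove_range _) j0)
                (div_pos (hA j0 l0) (hA j0 k0)).le
                (le_trans (div_pos (hA i0 k0) (hA i0 l0)).le
                  (le_ciSup (f := fun i => A i k0 / A i l0) (Finite.bddAbove_range _) i0))
      · rw [hiM, hjM]
        calc (A iM k0 / A iM l0) * (A jM l0 / A jM k0)
            = A iM k0 * A jM l0 / (A jM k0 * A iM l0) := by
              rw [div_mul_div_comm, mul_comm (A iM l0) (A jM k0)]
          _ ≤ R := by rw [hR]; exact hRmax iM jM k0 l0
  have hΔR : Δ = Real.log R := by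
    rw [hΔ]
    exact le_antisymm (csSup_le ⟨Real.log R, hmem⟩ hub)
      (le_csSup ⟨Real.log R, fun d hd => hub d hd⟩ hmem)
  constructor
  · rw [hΔR, Real.exp_log hRpos]
  -- second part
  · obtain ⟨i1, j1, k1, l1, hφatt, hφmin⟩ :=
      fin_inf4 (fun i j k l => A i k * A j l / (A j k * A i l))
    have hinv : ∀ i j k l : Fin n,
        (A i k * A j l / (A j k * A i l)) * (A i l * A j k / (A j l * A i k)) = 1 := by
      intro i j k l
      rw [div_mul_div_comm, div_eq_one_iff_eq (mul_pos (mul_pos (hA j k) (hA i l)) (mul_pos (hA j l) (hA i k))).ne']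
      ring
    have hφpos : 0 < φ := by rw [hφ, hφatt]; exact hrpos i1 j1 k1 l1
    have hφR : φ * R = 1 := by
      apply le_antisymm
      · calc φ * R ≤ (A i0 l0 * A j0 k0 / (A j0 l0 * A i0 k0)) * R := by
              apply mul_le_mul_of_nonneg_right _ hRpos.le
              rw [hφ, hφatt]
              exact hφmin i0 j0 l0 k0
          _ = 1 := by rw [hR, mul_comm]; exact hinv i0 j0 k0 l0
      · calc (1:ℝ) = φ * (A i1 l1 * A j1 k1 / (A j1 l1 * A i1 k1)) := by
              rw [hφ, hφatt]; exact (hinv i1 j1 k1 l1).symm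
          _ ≤ φ * R := by
              apply mul_le_mul_of_nonneg_left _ hφpos.le
              rw [hR]
              exact hRmax i1 j1 l1 k1
    have hφval : φ = Real.exp (-Δ) := by
      rw [hΔR, Real.exp_neg, Real.exp_log hRpos]
      exact eq_inv_of_mul_eq_one_left hφR
    have hsq : Real.sqrt φ = Real.exp (-(Δ/2)) := by
      rw [hφval, show -Δ = (-(Δ/2)) + (-(Δ/2)) by ring, Real.exp_add]
      exact Real.sqrt_mul_self (Real.exp_pos _).le
    rw [hsq, Real.tanh_eq_sinh_div_cosh, Real.sinh_eq, Real.cosh_eq]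
    have hneg : Real.exp (-(Δ/4)) = (Real.exp (Δ/4))⁻¹ := Real.exp_neg _
    have hhalf : Real.exp (-(Δ/2)) = (Real.exp (Δ/4))⁻¹ * (Real.exp (Δ/4))⁻¹ := by
      rw [show -(Δ/2) = (-(Δ/4)) + (-(Δ/4)) by ring, Real.exp_add, hneg]
    rw [hneg, hhalf]
    set u := Real.exp (Δ/4) with hu
    have hu0 : 0 < u := Real.exp_pos _
    have h2 : u + u⁻¹ ≠ 0 := by positivity
    have h3 : (1:ℝ) + u⁻¹ * u⁻¹ ≠ 0 := by positivity
    field_simp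
end

section
/- Let μ, ν be probability vectors in the interior of the n-simplex with Hilbert distance H(μ,ν) ≤ R. Then ‖μ − ν‖_{ℓ¹} = Σ_i |μ^i − ν^i| ≤ 2·tanh(R/4). -/
open scoped BigOperators

set_option maxHeartbeats 1600000 in
/-- For probability vectors `μ, ν` in the interior of the `n`-simplex with Hilbert
distance `H(μ,ν) = log((max_i μ_i/ν_i) · (max_j ν_j/μ_j)) ≤ R`, the `ℓ¹` distance
satisfies `‖μ − ν‖_{ℓ¹} ≤ 2 tanh (R/4)`. -/
theorem stmt18 {n : ℕ} (μ ν : Fin (n + 1) → ℝ)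
    (hμpos : ∀ i, 0 < μ i) (hνpos : ∀ i, 0 < ν i)
    (hμsum : (∑ i, μ i) = 1) (hνsum : (∑ i, ν i) = 1)
    (R : ℝ)
    (hH : Real.log ((⨆ i, μ i / ν i) * ⨆ j, ν j / μ j) ≤ R) :
    (∑ i, |μ i - ν i|) ≤ 2 * Real.tanh (R / 4) := by
  set M : ℝ := ⨆ i, μ i / ν i with hM
  set B : ℝ := ⨆ j, ν j / μ j with hB
  -- basic bounds on M and B
  have hleM : ∀ i, μ i / ν i ≤ M := fun i =>
    le_ciSup (f := fun i => μ i / ν i) (Set.Finite.bddAbove (Set.finite_range _)) i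
  have hleB : ∀ i, ν i / μ i ≤ B := fun i =>
    le_ciSup (f := fun j => ν j / μ j) (Set.Finite.bddAbove (Set.finite_range _)) i
  clear_value M B
  have hMpos : 0 < M := lt_of_lt_of_le (div_pos (hμpos 0) (hνpos 0)) (hleM 0)
  have hBpos : 0 < B := lt_of_lt_of_le (div_pos (hνpos 0) (hμpos 0)) (hleB 0)
  -- there is an index with μ i ≥ ν i, and one with ν i ≥ μ i
  have hex1 : ∃ i, ν i ≤ μ i := by
    by_contra h
    push_neg at h
    have : (∑ i, μ i) < ∑ i, ν i :=
      Finset.sum_lt_sum_of_nonempty Finset.univ_nonempty fun i _ => h i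
    rw [hμsum, hνsum] at this; exact lt_irrefl _ this
  have hex2 : ∃ i, μ i ≤ ν i := by
    by_contra h
    push_neg at h
    have : (∑ i, ν i) < ∑ i, μ i :=
      Finset.sum_lt_sum_of_nonempty Finset.univ_nonempty fun i _ => h i
    rw [hμsum, hνsum] at this; exact lt_irrefl _ this
  have hM1 : 1 ≤ M := by
    obtain ⟨i, hi⟩ := hex1
    exact le_trans ((one_le_div (hνpos i)).2 hi) (hleM i)
  have hB1 : 1 ≤ B := by
    obtain ⟨i, hi⟩ := hex2
    exact le_trans ((one_le_div (hμpos i)).2 hi) (hleB i)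
  set m : ℝ := B⁻¹ with hm
  clear_value m
  have hmpos : 0 < m := by rw [hm]; exact inv_pos.2 hBpos
  have hm1 : m ≤ 1 := by rw [hm]; exact inv_le_one_of_one_le₀ hB1
  -- pointwise bounds μ i ≤ M ν i and m ν i ≤ μ i
  have hup : ∀ i, μ i ≤ M * ν i := fun i => by
    have := hleM i; rw [div_le_iff₀ (hνpos i)] at this; linarith
  have hlo : ∀ i, m * ν i ≤ μ i := fun i => by
    have hBi := hleB i
    rw [div_le_iff₀ (hμpos i)] at hBi
    have h1 : m * (ν i) ≤ m * (B * μ i) :=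
      mul_le_mul_of_nonneg_left hBi hmpos.le
    have h2 : m * (B * μ i) = μ i := by
      rw [hm]; field_simp
    linarith
  -- sum of |μ - ν| equals twice sum of positive parts
  have habs : ∀ x : ℝ, |x| = 2 * max x 0 - x := by
    intro x
    rcases le_total x 0 with h | h
    · rw [abs_of_nonpos h, max_eq_right h]; ring
    · rw [abs_of_nonneg h, max_eq_left h]; ring
  set S : ℝ := ∑ i, |μ i - ν i| with hS
  set T : ℝ := ∑ i, max (μ i - ν i) 0 with hT
  clear_value S T
  have hST : S = 2 * T := by
    rw [hS, hT]
    have : ∀ i ∈ Finset.univ, |μ i - ν i| = 2 * max (μ i - ν i) 0 - (μ i - ν i) :=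
      fun i _ => habs _
    rw [Finset.sum_congr rfl this, Finset.sum_sub_distrib, ← Finset.mul_sum,
      Finset.sum_sub_distrib, hμsum, hνsum]
    ring
  have hTnonneg : 0 ≤ T := by
    rw [hT]; exact Finset.sum_nonneg fun i _ => le_max_right _ _
  -- key summed inequality : T * (M - m) ≤ (M-1)*(1-m)
  have hkey : T * (M - m) ≤ (M - 1) * (1 - m) := by
    have hpt : ∀ i, max (μ i - ν i) 0 * (M - m) ≤ (M - 1) * (μ i - m * ν i) := by
      intro i
      have h1 := hup i
      have h2 := hlo i
      have hν := hνpos i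
      rcases le_total (μ i - ν i) 0 with h | h
      · rw [max_eq_right h]
        have : 0 ≤ μ i - m * ν i := by linarith
        nlinarith
      · rw [max_eq_left h]
        nlinarith [mul_nonneg (sub_nonneg.2 hm1) (sub_nonneg.2 h1)]
    calc T * (M - m) = ∑ i, max (μ i - ν i) 0 * (M - m) := by rw [hT, Finset.sum_mul]
      _ ≤ ∑ i, (M - 1) * (μ i - m * ν i) := Finset.sum_le_sum fun i _ => hpt i
      _ = (M - 1) * (1 - m) := by
          rw [← Finset.mul_sum, Finset.sum_sub_distrib, ← Finset.mul_sum, hμsum, hνsum]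
          ring
  -- easy bounds : T ≤ M - 1 and T ≤ 1 - m
  have hTM : T ≤ M - 1 := by
    rw [hT]
    have : (∑ i, max (μ i - ν i) 0) ≤ ∑ i, (M - 1) * ν i := by
      apply Finset.sum_le_sum
      intro i _
      have h1 := hup i
      have h2 := (hνpos i).le
      rcases le_total (μ i - ν i) 0 with h | h
      · rw [max_eq_right h]; nlinarith
      · rw [max_eq_left h]; nlinarith
    rwa [← Finset.mul_sum, hνsum, mul_one] at this
  have hTT : T = ∑ i, max (ν i - μ i) 0 := by
    have h : ∀ i ∈ Finset.univ,
        max (μ i - ν i) 0 = max (ν i - μ i) 0 + (μ i - ν i) := by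
      intro i _
      rcases le_total (μ i - ν i) 0 with h | h
      · rw [max_eq_right h, max_eq_left (by linarith)]; ring
      · rw [max_eq_left h, max_eq_right (by linarith)]; ring
    rw [hT, Finset.sum_congr rfl h, Finset.sum_add_distrib, Finset.sum_sub_distrib,
      hμsum, hνsum]
    ring
  have hTm : T ≤ 1 - m := by
    have h : (∑ i, max (ν i - μ i) 0) ≤ ∑ i, (1 - m) * ν i := by
      apply Finset.sum_le_sum
      intro i _
      have h2 := hlo i
      rcases le_total (ν i - μ i) 0 with h | h
      · rw [max_eq_right h]; nlinarith [mul_nonneg (sub_nonneg.2 hm1) (hνpos i).le]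
      · rw [max_eq_left h]; nlinarith
    rw [← Finset.mul_sum, hνsum, mul_one] at h
    rw [hTT]; exact h
  -- exp R ≥ M * B = M / m
  have hMB : M * B ≤ Real.exp R := by
    have := Real.exp_le_exp.2 hH
    rwa [Real.exp_log (mul_pos hMpos hBpos)] at this
  set E : ℝ := Real.exp (R / 2) with hE
  clear_value E
  have hEpos : 0 < E := by rw [hE]; exact Real.exp_pos _
  have hE2 : E ^ 2 = Real.exp R := by
    rw [hE, sq, ← Real.exp_add]; ring_nf
  have hE2m : M ≤ E ^ 2 * m := by
    rw [hE2, hm]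
    have h1 : M * B * B⁻¹ ≤ Real.exp R * B⁻¹ :=
      mul_le_mul_of_nonneg_right hMB (inv_pos.2 hBpos).le
    have h2 : M * B * B⁻¹ = M := by field_simp
    linarith
  have hE1 : 1 ≤ E := by
    have : (1:ℝ) ≤ E ^ 2 := le_trans (le_trans hM1 hE2m) (by nlinarith [hm1, hmpos])
    nlinarith
  -- tanh (R/4) = (E - 1)/(E + 1)
  have htanh : Real.tanh (R / 4) = (E - 1) / (E + 1) := by
    rw [Real.tanh_eq_sinh_div_cosh, Real.sinh_eq, Real.cosh_eq]
    set e : ℝ := Real.exp (R / 4) with he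
    clear_value e
    have hepos : 0 < e := by rw [he]; exact Real.exp_pos _
    have hee : e * e = E := by rw [he, hE, ← Real.exp_add]; ring_nf
    have hinv : Real.exp (-(R / 4)) = e⁻¹ := by
      rw [Real.exp_neg, he]
    rw [hinv, ← hee]
    rw [div_div_div_comm]
    have h1 : (0:ℝ) < e + e⁻¹ := by positivity
    have h2 : (0:ℝ) < e * e + 1 := by positivity
    field_simp
  -- introduce square roots
  set a : ℝ := Real.sqrt M with ha
  set b : ℝ := Real.sqrt m with hb
  have ha2 : a ^ 2 = M := by rw [ha]; exact Real.sq_sqrt hMpos.le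
  have hb2 : b ^ 2 = m := by rw [hb]; exact Real.sq_sqrt hmpos.le
  have hapos : 0 < a := by rw [ha]; exact Real.sqrt_pos.2 hMpos
  have hbpos : 0 < b := by rw [hb]; exact Real.sqrt_pos.2 hmpos
  have hEb : a ≤ E * b := by
    rw [ha, hb]
    have h1 : Real.sqrt M ≤ Real.sqrt (E ^ 2 * m) := Real.sqrt_le_sqrt hE2m
    have h2 : Real.sqrt (E ^ 2 * m) = E * Real.sqrt m := by
      rw [Real.sqrt_mul (by positivity), Real.sqrt_sq hEpos.le]
    rw [← h2]; exact h1
  have ha1 : 1 ≤ a := by rw [ha]; exact Real.one_le_sqrt.2 hM1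
  have hb1 : b ≤ 1 := by rw [hb]; exact Real.sqrt_le_one.2 hm1
  clear_value a b
  -- final algebra
  rw [htanh, hST]
  rw [show (2:ℝ) * ((E - 1) / (E + 1)) = 2 * (E - 1) / (E + 1) by ring,
    le_div_iff₀ (by linarith : (0:ℝ) < E + 1)]
  -- goal : 2 * T * (E + 1) ≤ 2 * (E - 1)
  clear hH hleM hleB habs hex1 hex2 hS hT hST htanh hE hE2 hE2m hMB ha hb hm hM hB
  clear hTT hup hlo hμpos hνpos hμsum hνsum μ ν
  have hPQ : a * (a^2*b^2 - 2*b^2 + 1) - b * (2*a^2 - a^2*b^2 - 1) = (a+b)*(a*b-1)^2 := by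
    ring
  have hPQ1 : 0 ≤ a^2*b^2 - 2*b^2 + 1 := by
    nlinarith [mul_nonneg (by nlinarith [sq_nonneg a] : (0:ℝ) ≤ a^2 - 1) (sq_nonneg b), sq_nonneg b]
  have hstep : 0 ≤ E * (a^2*b^2 - 2*b^2 + 1) * b - b * (2*a^2 - a^2*b^2 - 1) := by
    have h1 : a * (a^2*b^2 - 2*b^2 + 1) ≤ E * b * (a^2*b^2 - 2*b^2 + 1) :=
      mul_le_mul_of_nonneg_right hEb hPQ1
    nlinarith [mul_nonneg (by linarith : (0:ℝ) ≤ a + b) (sq_nonneg (a*b-1))]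
  -- so E*(P-Q) ≥ (P+Q) where P = M-m, Q = (M-1)(1-m)
  have hED : 2*a^2 - a^2*b^2 - 1 ≤ E * (a^2*b^2 - 2*b^2 + 1) := by
    have := hstep
    nlinarith [hbpos]
  rcases eq_or_lt_of_le (by nlinarith : b ≤ a) with hab | hab
  · -- a = b forces a = b = 1, M = m, T ≤ M - 1 = 0
    have hb1' : a = 1 := le_antisymm (by nlinarith [hab ▸ hb1]) ha1
    have hMm : M = 1 := by rw [← ha2, hb1']; ring
    have hT0 : T ≤ 0 := by rw [hMm] at hTM; linarith
    have : T = 0 := le_antisymm hT0 hTnonneg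
    rw [this]
    nlinarith [hE1]
  · -- a > b : combine hkey with hED
    have hMm : 0 < M - m := by nlinarith
    -- (2T)(E+1) ≤ 2(E-1): multiply through by (M - m) > 0
    have h1 : T * (M - m) * (E + 1) ≤ (M - 1) * (1 - m) * (E + 1) :=
      mul_le_mul_of_nonneg_right hkey (by linarith)
    have h2 : (M - 1) * (1 - m) * (E + 1) ≤ (E - 1) * (M - m) := by
      have h5 : 2*M - M*m - 1 ≤ E * (M*m - 2*m + 1) := by
        rw [← ha2, ← hb2]; linarith [hED]
      nlinarith [h5]
    have h3 : T * (E + 1) * (M - m) ≤ (E - 1) * (M - m) := by nlinarith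
    have h4 : T * (E + 1) ≤ E - 1 := le_of_mul_le_mul_right (by nlinarith [h3]) hMm
    linarith
end
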